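/- arXiv:2407.01916 — 4 statements merged into one kernel-verified Lean document; each statement's English description precedes it below -/
import Mathlib

section
/- Fix ρ ∈ (0,1), T ∈ ℕ, and a subset S of a finite universe. Consider a stream c_1,...,c_T where each c_t is sampled independently with probability ρ into a sample S'. Define Z_t = |S ∩ C'_t|/(ρT) − |S ∩ C_t|/T, where C_t = (c_1,...,c_t) and C'_t is the sampled subsequence. Then (Z_0, Z_1, ..., Z_T) is a martingale with Z_0 = 0, with increments bounded by 1/(ρT), and with conditional variance of Z_t given the past at most 1/(ρT²), even when c_t is chosen adaptively based on c_1,...,c_{t-1} and the sampling outcomes so far. -/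
open MeasureTheory Filter Set

private lemma indicator_integrable' {Ω : Type*} {m0 : MeasurableSpace Ω} {μ : Measure Ω}
    [IsProbabilityMeasure μ] {f : Ω → ℝ} (hf : Measurable f)
    (hval : ∀ ω, f ω = 0 ∨ f ω = 1) : Integrable f μ := by
  refine (integrable_const (1:ℝ)).mono' hf.aestronglyMeasurable ?_
  filter_upwards with ω
  rcases hval ω with h | h <;> simp [h]

private lemma key_pullout {Ω : Type*} {m0 : MeasurableSpace Ω} (μ : Measure Ω)
    [IsProbabilityMeasure μ] {m : MeasurableSpace Ω} (hm : m ≤ m0)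
    {s ξ : Ω → ℝ} (hs : Measurable[m] s) (hξ : Measurable[m0] ξ)
    (hsval : ∀ ω, s ω = 0 ∨ s ω = 1) (hξval : ∀ ω, ξ ω = 0 ∨ ξ ω = 1)
    {ρ : ℝ} (hcond : μ[ξ|m] =ᵐ[μ] fun _ => ρ) (a b : ℝ) :
    μ[fun ω => s ω * (a * ξ ω + b)|m] =ᵐ[μ] fun ω => s ω * (a * ρ + b) := by
  have hsM : Measurable[m0] s := hs.mono hm le_rfl
  have hξint : Integrable ξ μ := indicator_integrable' hξ hξval
  have hsint : Integrable s μ := indicator_integrable' hsM hsval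
  have hgint : Integrable (fun ω => a * ξ ω + b) μ :=
    (hξint.const_mul a).add (integrable_const b)
  have hprod : Integrable (fun ω => s ω * (a * ξ ω + b)) μ :=
    hgint.bdd_mul (c := 1) hsM.aestronglyMeasurable
      (Filter.Eventually.of_forall fun ω => by rcases hsval ω with h | h <;> simp [h])
  have h1 : μ[fun ω => s ω * (a * ξ ω + b)|m]
      =ᵐ[μ] s * μ[fun ω => a * ξ ω + b|m] :=
    condExp_mul_of_stronglyMeasurable_left hs.stronglyMeasurable hprod hgint
  have h2 : μ[fun ω => a * ξ ω + b|m] =ᵐ[μ] fun _ => a * ρ + b := by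
    have hA : μ[(fun ω => a * ξ ω) + (fun _ => b)|m]
        =ᵐ[μ] μ[fun ω => a * ξ ω|m] + μ[(fun _ => b : Ω → ℝ)|m] :=
      condExp_add (hξint.const_mul a) (integrable_const b) m
    have hB : μ[a • ξ|m] =ᵐ[μ] a • μ[ξ|m] := condExp_smul a ξ m
    have hC : μ[(fun _ => b : Ω → ℝ)|m] = fun _ => b := condExp_const hm b
    have hB' : μ[fun ω => a * ξ ω|m] =ᵐ[μ] fun ω => a * (μ[ξ|m]) ω := by
      exact hB
    filter_upwards [hA, hB', hcond] with ω hω1 hω2 hω3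
    have : (fun ω => a * ξ ω + b) = (fun ω => a * ξ ω) + (fun _ => b) := rfl
    rw [this, hω1]
    simp only [Pi.add_apply, hω2, hω3, hC]
  filter_upwards [h1, h2] with ω hω1 hω2
  rw [hω1, Pi.mul_apply, hω2]

/-- The Bernoulli-sampling residual process `Z_t = |S∩C'_t|/(ρT) − |S∩C_t|/T`
of a (possibly adaptive) stream is a martingale starting at `0`, with increments
bounded by `1/(ρT)` and conditional variance at most `1/(ρT²)`. Here `s t` is the
indicator that the `t`-th stream element belongs to the set `S` and `ξ t` is the
indicator that it is retained by the sampler; `𝒢 t` is the information available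
just before the `t`-th sampling decision. -/
theorem bernoulli_sampling_martingale
    {Ω : Type*} {m0 : MeasurableSpace Ω} (μ : Measure Ω) [IsProbabilityMeasure μ]
    (ℱ : Filtration ℕ m0) (𝒢 : ℕ → MeasurableSpace Ω)
    (ρ : ℝ) (hρ : ρ ∈ Set.Ioo (0:ℝ) 1) (T : ℕ) (hT : 0 < T)
    (s ξ : ℕ → Ω → ℝ)
    (horder : ∀ t, 1 ≤ t → ℱ (t - 1) ≤ 𝒢 t ∧ 𝒢 t ≤ ℱ t)
    (hsval : ∀ t ω, s t ω = 0 ∨ s t ω = 1)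
    (hξval : ∀ t ω, ξ t ω = 0 ∨ ξ t ω = 1)
    (hsmeas : ∀ t, 1 ≤ t → Measurable[𝒢 t] (s t))
    (hξmeas : ∀ t, 1 ≤ t → Measurable[ℱ t] (ξ t))
    (hcond : ∀ t, 1 ≤ t → μ[ξ t | 𝒢 t] =ᵐ[μ] fun _ => ρ)
    (Z : ℕ → Ω → ℝ)
    (hZ : ∀ t ω, Z t ω = (∑ u ∈ Finset.Icc 1 t, s u ω * (ξ u ω / ρ - 1)) / T) :
    Martingale Z ℱ μ ∧ (∀ ω, Z 0 ω = 0) ∧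
      (∀ t, 1 ≤ t → ∀ᵐ ω ∂μ, |Z t ω - Z (t - 1) ω| ≤ 1 / (ρ * T)) ∧
      (∀ t, 1 ≤ t →
        ∀ᵐ ω ∂μ,
          (μ[fun ω => (Z t ω - Z (t - 1) ω) ^ 2 | ℱ (t - 1)]) ω ≤ 1 / (ρ * T ^ 2)) := by
  obtain ⟨hρ0, hρ1⟩ := hρ
  have hρne : ρ ≠ 0 := ne_of_gt hρ0
  have hT' : (0:ℝ) < T := by exact_mod_cast hT
  have hTne : (T:ℝ) ≠ 0 := ne_of_gt hT'
  have h1ρ : (1:ℝ) ≤ 1 / ρ := by rw [le_div_iff₀ hρ0]; linarith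
  -- measurability of s, ξ w.r.t. ℱ t and m0
  have hsF : ∀ t, 1 ≤ t → Measurable[ℱ t] (s t) :=
    fun t ht => (hsmeas t ht).mono (horder t ht).2 le_rfl
  have hsM : ∀ t, 1 ≤ t → Measurable (s t) :=
    fun t ht => (hsF t ht).mono (ℱ.le t) le_rfl
  have hξM : ∀ t, 1 ≤ t → Measurable (ξ t) :=
    fun t ht => (hξmeas t ht).mono (ℱ.le t) le_rfl
  -- increment identity
  have hinc : ∀ n ω, Z (n + 1) ω - Z n ω = s (n+1) ω * (ξ (n+1) ω / ρ - 1) / T := by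
    intro n ω
    rw [hZ, hZ, Finset.sum_Icc_succ_top (Nat.le_add_left 1 n)]
    ring
  -- pointwise bound on increments
  have hDbound : ∀ t ω, |s t ω * (ξ t ω / ρ - 1)| ≤ 1 / ρ := by
    intro t ω
    rw [abs_le]
    rcases hsval t ω with h | h <;> rcases hξval t ω with h' | h' <;>
      rw [h, h'] <;> constructor <;>
      simp only [zero_mul, one_mul, zero_div] <;> linarith
  -- measurability of Z t w.r.t. ℱ t
  have hZmeas : ∀ t, Measurable[ℱ t] (Z t) := by
    intro t
    have hfun : Z t = fun ω => (∑ u ∈ Finset.Icc 1 t, s u ω * (ξ u ω / ρ - 1)) / T :=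
      funext (hZ t)
    rw [hfun]
    apply Measurable.div_const
    apply Finset.measurable_sum
    intro u hu
    obtain ⟨hu1, hut⟩ := Finset.mem_Icc.mp hu
    have hsu : Measurable[ℱ t] (s u) := (hsF u hu1).mono (ℱ.mono hut) le_rfl
    have hξu : Measurable[ℱ t] (ξ u) := (hξmeas u hu1).mono (ℱ.mono hut) le_rfl
    exact hsu.mul ((hξu.div_const ρ).sub measurable_const)
  -- boundedness of Z t
  have hZbound : ∀ t ω, |Z t ω| ≤ t * (1/ρ) / T := by
    intro t ω
    rw [hZ, abs_div, abs_of_nonneg (le_of_lt hT'), div_le_div_iff_of_pos_right hT']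
    calc |∑ u ∈ Finset.Icc 1 t, s u ω * (ξ u ω / ρ - 1)|
        ≤ ∑ u ∈ Finset.Icc 1 t, |s u ω * (ξ u ω / ρ - 1)| := Finset.abs_sum_le_sum_abs _ _
      _ ≤ ∑ u ∈ Finset.Icc 1 t, (1/ρ) := Finset.sum_le_sum fun u _ => hDbound u ω
      _ ≤ t * (1/ρ) := by
          rw [Finset.sum_const, Nat.card_Icc, Nat.add_sub_cancel, nsmul_eq_mul]
  have hZint : ∀ t, Integrable (Z t) μ := by
    intro t
    refine (integrable_const ((t : ℝ) * (1/ρ) / T)).mono'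
      ((hZmeas t).mono (ℱ.le t) le_rfl).aestronglyMeasurable ?_
    filter_upwards with ω using hZbound t ω
  -- key conditional expectation: the increment is conditionally centered
  have hDcond : ∀ t, 1 ≤ t →
      μ[fun ω => s t ω * (ξ t ω / ρ - 1) / T|ℱ (t-1)] =ᵐ[μ] fun _ => (0:ℝ) := by
    intro t ht
    have hm𝒢 : 𝒢 t ≤ m0 := (horder t ht).2.trans (ℱ.le t)
    have hfun : (fun ω => s t ω * (ξ t ω / ρ - 1) / T)
        = fun ω => s t ω * ((1/(ρ*T)) * ξ t ω + (-1/T)) := by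
      funext ω; field_simp; ring
    have hG : μ[fun ω => s t ω * (ξ t ω / ρ - 1) / T|𝒢 t]
        =ᵐ[μ] fun ω => s t ω * ((1/(ρ*T)) * ρ + (-1/T)) := by
      rw [hfun]
      exact key_pullout μ hm𝒢 (hsmeas t ht) (hξM t ht) (hsval t) (hξval t)
        (hcond t ht) _ _
    have hval : (fun ω => s t ω * ((1/(ρ*T)) * ρ + (-1/T))) = fun _ => (0:ℝ) := by
      funext ω
      have : (1/(ρ*T)) * ρ + (-1/T) = 0 := by field_simp; ring
      rw [this, mul_zero]
    rw [hval] at hG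
    have htower : μ[μ[fun ω => s t ω * (ξ t ω / ρ - 1) / T|𝒢 t]|ℱ (t-1)]
        =ᵐ[μ] μ[fun ω => s t ω * (ξ t ω / ρ - 1) / T|ℱ (t-1)] :=
      condExp_condExp_of_le (horder t ht).1 hm𝒢
    refine htower.symm.trans ?_
    refine (condExp_congr_ae hG).trans ?_
    rw [show (fun _ : Ω => (0:ℝ)) = (0 : Ω → ℝ) from rfl, condExp_zero]
  -- Martingale
  have hmart : Martingale Z ℱ μ := by
    refine martingale_nat (fun t => (hZmeas t).stronglyMeasurable) hZint fun i => ?_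
    have hadd : Z (i+1) = Z i + fun ω => s (i+1) ω * (ξ (i+1) ω / ρ - 1) / T := by
      funext ω
      have := hinc i ω
      simp only [Pi.add_apply]
      linarith
    have hi1 : 1 ≤ i + 1 := Nat.le_add_left 1 i
    have hDi : Integrable (fun ω => s (i+1) ω * (ξ (i+1) ω / ρ - 1) / T) μ := by
      have : (fun ω => s (i+1) ω * (ξ (i+1) ω / ρ - 1) / T)
          = fun ω => Z (i+1) ω - Z i ω := by funext ω; rw [hinc]
      rw [this]
      exact (hZint (i+1)).sub (hZint i)
    have h1 : μ[Z (i+1)|ℱ i] =ᵐ[μ] μ[Z i|ℱ i]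
        + μ[fun ω => s (i+1) ω * (ξ (i+1) ω / ρ - 1) / T|ℱ i] := by
      rw [hadd]; exact condExp_add (hZint i) hDi _
    have h2 : μ[Z i|ℱ i] = Z i :=
      condExp_of_stronglyMeasurable (ℱ.le i) (hZmeas i).stronglyMeasurable (hZint i)
    have h3 := hDcond (i+1) hi1
    simp only [Nat.add_sub_cancel] at h3
    filter_upwards [h1, h3] with ω hω1 hω3
    rw [hω1, Pi.add_apply, h2, hω3]
    simp
  refine ⟨hmart, ?_, ?_, ?_⟩
  · intro ω; rw [hZ]; simp
  · intro t ht
    obtain ⟨n, rfl⟩ : ∃ n, t = n + 1 := ⟨t - 1, (Nat.succ_pred_eq_of_pos ht).symm⟩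
    filter_upwards with ω
    simp only [Nat.add_sub_cancel]
    rw [hinc, abs_div, abs_of_nonneg (le_of_lt hT')]
    rw [div_le_div_iff₀ hT' (by positivity : (0:ℝ) < ρ * T)]
    have := hDbound (n+1) ω
    have h0ρ : (0:ℝ) < 1/ρ := by positivity
    calc |s (n+1) ω * (ξ (n+1) ω / ρ - 1)| * (ρ * T) ≤ (1/ρ) * (ρ * T) := by
          apply mul_le_mul_of_nonneg_right this; positivity
      _ = 1 * T := by field_simp
  · intro t ht
    have hm𝒢 : 𝒢 t ≤ m0 := (horder t ht).2.trans (ℱ.le t)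
    obtain ⟨n, rfl⟩ : ∃ n, t = n + 1 := ⟨t - 1, (Nat.succ_pred_eq_of_pos ht).symm⟩
    simp only [Nat.add_sub_cancel] at hm𝒢 ⊢
    set a : ℝ := (1/ρ^2 - 2/ρ)/T^2 with ha
    set b : ℝ := 1/T^2 with hb
    -- pointwise identity for the squared increment
    have hsq : (fun ω => (Z (n+1) ω - Z n ω) ^ 2)
        = fun ω => s (n+1) ω * (a * ξ (n+1) ω + b) := by
      funext ω
      rw [hinc]
      rcases hsval (n+1) ω with h | h <;> rcases hξval (n+1) ω with h' | h' <;>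
        rw [h, h'] <;> rw [ha, hb] <;> field_simp <;> ring
    have hG : μ[fun ω => (Z (n+1) ω - Z n ω) ^ 2|𝒢 (n+1)]
        =ᵐ[μ] fun ω => s (n+1) ω * (a * ρ + b) := by
      rw [hsq]
      exact key_pullout μ hm𝒢 (hsmeas (n+1) ht) (hξM (n+1) ht) (hsval (n+1))
        (hξval (n+1)) (hcond (n+1) ht) _ _
    have htower : μ[μ[fun ω => (Z (n+1) ω - Z n ω) ^ 2|𝒢 (n+1)]|ℱ n]
        =ᵐ[μ] μ[fun ω => (Z (n+1) ω - Z n ω) ^ 2|ℱ n] :=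
      condExp_condExp_of_le (by simpa using (horder (n+1) ht).1) hm𝒢
    have hchain : μ[fun ω => (Z (n+1) ω - Z n ω) ^ 2|ℱ n]
        =ᵐ[μ] μ[fun ω => s (n+1) ω * (a * ρ + b)|ℱ n] :=
      htower.symm.trans (condExp_congr_ae hG)
    -- bound the middle function
    have hgle : (fun ω => s (n+1) ω * (a * ρ + b)) ≤ fun _ => 1/(ρ * T^2) := by
      intro ω
      have hc : a * ρ + b = (1/ρ - 1)/T^2 := by rw [ha, hb]; field_simp; ring
      have hT2 : (0:ℝ) < (T:ℝ)^2 := by positivity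
      have hc0 : (0:ℝ) ≤ a * ρ + b := by
        rw [hc]; exact div_nonneg (by linarith) (le_of_lt hT2)
      have hcle : a * ρ + b ≤ 1/(ρ * T^2) := by
        rw [hc, div_le_div_iff₀ (by positivity) (by positivity)]
        have hinv : (1/ρ) * ρ = 1 := by field_simp
        nlinarith [mul_pos hρ0 hT2]
      show s (n+1) ω * (a * ρ + b) ≤ 1/(ρ * (T:ℝ)^2)
      rcases hsval (n+1) ω with h | h <;> rw [h]
      · rw [zero_mul]; positivity
      · rw [one_mul]; exact hcle
    have hgint : Integrable (fun ω => s (n+1) ω * (a * ρ + b)) μ :=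
      (indicator_integrable' (hsM (n+1) ht) (hsval (n+1))).mul_const _
    have hmono : μ[fun ω => s (n+1) ω * (a * ρ + b)|ℱ n]
        ≤ᵐ[μ] μ[(fun _ => 1/(ρ * T^2) : Ω → ℝ)|ℱ n] :=
      condExp_mono hgint (integrable_const _) (Filter.Eventually.of_forall hgle)
    have hconst : μ[(fun _ => 1/(ρ * T^2) : Ω → ℝ)|ℱ n] = fun _ => 1/(ρ * T^2) :=
      condExp_const (ℱ.le n) _
    filter_upwards [hchain, hmono] with ω hω1 hω2
    rw [hω1]
    calc (μ[fun ω => s (n+1) ω * (a * ρ + b)|ℱ n]) ω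
        ≤ (μ[(fun _ => 1/(ρ * T^2) : Ω → ℝ)|ℱ n]) ω := hω2
      _ = 1/(ρ * T^2) := by rw [hconst]
      _ ≤ 1/(ρ * (T:ℝ)^2) := le_refl _
end

section
/- Under the setup of Bernoulli sampling of a (possibly adaptive) stream of length T with retention probability ρ, if ρ ≥ 10·ln(4/δ)/(ε²T), then with probability at least 1 − δ the density of any fixed set S in the sampled subsequence differs from its density in the full stream by at most ε, i.e., P(|d_S(C) − d_S(C')| ≥ ε) ≤ δ, where d_S(C) denotes the fraction of elements of sequence C that belong to S. -/
open MeasureTheory Filter Set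

lemma exp_quad_bound {x : ℝ} (hx : |x| ≤ 1/2) : Real.exp x - 1 - x ≤ 11/18 * x ^ 2 := by
  have h := Real.exp_bound (x := x) (by linarith [abs_nonneg x]) (n := 3) (by norm_num)
  have hsum : ∑ m ∈ Finset.range 3, x ^ m / m.factorial = 1 + x + x ^ 2 / 2 := by
    norm_num [Finset.sum_range_succ, Nat.factorial]
  rw [hsum] at h
  have h3 : |x| ^ 3 ≤ 1/2 * x ^ 2 := by
    have : |x| ^ 3 = |x| * x ^ 2 := by
      rw [pow_succ, sq_abs]; ring
    rw [this]
    nlinarith [sq_nonneg x, abs_nonneg x]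
  have hb : (3:ℕ).succ / ((3:ℕ).factorial * (3:ℕ) : ℝ) = 2/9 := by
    norm_num [Nat.factorial]
  rw [hb] at h
  have := abs_le.1 h
  nlinarith [this.2, h3, sq_nonneg x]

open MeasureTheory Filter Set


lemma bernoulli_prod_integral_le_one
    {Ω : Type*} {m0 : MeasurableSpace Ω} (μ : Measure Ω) [IsProbabilityMeasure μ]
    (ℱ : Filtration ℕ m0) (𝒢 : ℕ → MeasurableSpace Ω)
    (ρ : ℝ) (ξ c : ℕ → Ω → ℝ)
    (horder : ∀ t, 1 ≤ t → ℱ (t - 1) ≤ 𝒢 t ∧ 𝒢 t ≤ ℱ t)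
    (hξval : ∀ t ω, ξ t ω = 0 ∨ ξ t ω = 1)
    (hcval : ∀ t ω, c t ω = 0 ∨ c t ω = 1)
    (hcmeas : ∀ t, 1 ≤ t → Measurable[𝒢 t] (c t))
    (hξmeas : ∀ t, 1 ≤ t → Measurable[ℱ t] (ξ t))
    (hcond : ∀ t, 1 ≤ t → μ[ξ t | 𝒢 t] =ᵐ[μ] fun _ => ρ)
    (r : ℝ) (hr : -1 ≤ r) (k : ℕ) :
    ∫ ω, ∏ t ∈ Finset.Icc 1 k,
      ((1 + r * (c t ω * ξ t ω)) * Real.exp (-(ρ * r * c t ω))) ∂μ ≤ 1 := by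
  set F : ℕ → Ω → ℝ := fun t ω =>
    (1 + r * (c t ω * ξ t ω)) * Real.exp (-(ρ * r * c t ω)) with hF
  set M : ℝ := (1 + |r|) * Real.exp |ρ * r| with hM
  have hM0 : 0 ≤ M := by positivity
  have hcξ01 : ∀ t ω, c t ω * ξ t ω = 0 ∨ c t ω * ξ t ω = 1 := by
    intro t ω
    rcases hcval t ω with h | h <;> rcases hξval t ω with h' | h' <;> simp [h, h']
  have hFnn : ∀ t ω, 0 ≤ F t ω := by
    intro t ω
    apply mul_nonneg _ (Real.exp_nonneg _)
    rcases hcξ01 t ω with h | h <;> rw [h] <;> nlinarith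
  have hexp_le : ∀ t ω, Real.exp (-(ρ * r * c t ω)) ≤ Real.exp |ρ * r| := by
    intro t ω
    apply Real.exp_le_exp.2
    rcases hcval t ω with h | h <;> rw [h]
    · simpa using abs_nonneg (ρ * r)
    · rw [mul_one]; exact neg_le_abs _
  have hFle : ∀ t ω, F t ω ≤ M := by
    intro t ω
    apply mul_le_mul
    · rcases hcξ01 t ω with h | h <;> rw [h]
      · simp [abs_nonneg]
      · simp [le_abs_self]
    · exact hexp_le t ω
    · exact Real.exp_nonneg _
    · positivity
  have hFmeas : ∀ t, 1 ≤ t → Measurable[ℱ t] (F t) := by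
    intro t ht
    have hc : Measurable[ℱ t] (c t) := (hcmeas t ht).mono ((horder t ht).2) le_rfl
    have hξ : Measurable[ℱ t] (ξ t) := hξmeas t ht
    exact ((measurable_const.add (measurable_const.mul (hc.mul hξ))).mul
      ((Real.measurable_exp.comp ((measurable_const.mul hc).neg))))
  have hPmeas : ∀ k, Measurable[ℱ k] (fun ω => ∏ t ∈ Finset.Icc 1 k, F t ω) := by
    intro k
    apply Finset.measurable_prod
    intro t ht
    rw [Finset.mem_Icc] at ht
    exact (hFmeas t ht.1).mono (ℱ.mono ht.2) le_rfl
  have hPnn : ∀ k ω, 0 ≤ ∏ t ∈ Finset.Icc 1 k, F t ω := fun k ω =>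
    Finset.prod_nonneg fun t _ => hFnn t ω
  have hPle : ∀ k ω, ∏ t ∈ Finset.Icc 1 k, F t ω ≤ M ^ k := by
    intro k ω
    calc ∏ t ∈ Finset.Icc 1 k, F t ω ≤ ∏ t ∈ Finset.Icc 1 k, M :=
          Finset.prod_le_prod (fun t _ => hFnn t ω) (fun t _ => hFle t ω)
      _ = M ^ k := by rw [Finset.prod_const, Nat.card_Icc]; simp
  have hbdd_int : ∀ (f : Ω → ℝ) (C : ℝ), Measurable[m0] f → (∀ ω, |f ω| ≤ C) →
      Integrable f μ := by
    intro f C hf hC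
    exact Integrable.mono' (integrable_const C)
      (hf.aestronglyMeasurable : AEStronglyMeasurable f μ)
      (ae_of_all _ fun ω => by simpa [Real.norm_eq_abs] using hC ω)
  have hPint : ∀ k, Integrable (fun ω => ∏ t ∈ Finset.Icc 1 k, F t ω) μ := by
    intro k
    refine hbdd_int _ (M ^ k) ((hPmeas k).mono (ℱ.le k) le_rfl) fun ω => ?_
    rw [abs_of_nonneg (hPnn k ω)]
    exact hPle k ω
  induction k with
  | zero => simp
  | succ k ih =>
    have hk1 : 1 ≤ k + 1 := Nat.le_add_left 1 k
    have hm : 𝒢 (k + 1) ≤ m0 := ((horder (k+1) hk1).2).trans (ℱ.le (k+1))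
    have hFkm : Measurable[𝒢 (k+1)] (fun ω => ∏ t ∈ Finset.Icc 1 k, F t ω) := by
      have hle := (horder (k+1) hk1).1
      simp only [Nat.add_sub_cancel] at hle
      exact (hPmeas k).mono hle le_rfl
    have hcm : Measurable[𝒢 (k+1)] (c (k+1)) := hcmeas (k+1) hk1
    have hAm : Measurable[𝒢 (k+1)] (fun ω => Real.exp (-(ρ * r * c (k+1) ω))) :=
      Real.measurable_exp.comp ((measurable_const.mul hcm).neg)
    set h : Ω → ℝ := fun ω => (∏ t ∈ Finset.Icc 1 k, F t ω) *
      Real.exp (-(ρ * r * c (k+1) ω)) * c (k+1) ω with hh_def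
    have hhm : Measurable[𝒢 (k+1)] h := (hFkm.mul hAm).mul hcm
    have hc_abs : ∀ ω, |c (k+1) ω| ≤ 1 := by
      intro ω; rcases hcval (k+1) ω with h' | h' <;> rw [h'] <;> norm_num
    have hξ_abs : ∀ ω, |ξ (k+1) ω| ≤ 1 := by
      intro ω; rcases hξval (k+1) ω with h' | h' <;> rw [h'] <;> norm_num
    have hg_abs : ∀ ω, |(∏ t ∈ Finset.Icc 1 k, F t ω) *
        Real.exp (-(ρ * r * c (k+1) ω))| ≤ M ^ k * Real.exp |ρ * r| := by
      intro ω
      rw [abs_mul]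
      apply mul_le_mul
      · rw [abs_of_nonneg (hPnn k ω)]; exact hPle k ω
      · rw [Real.abs_exp]; exact hexp_le (k+1) ω
      · exact abs_nonneg _
      · exact pow_nonneg hM0 k
    have hhbd : ∀ ω, |h ω| ≤ M ^ k * Real.exp |ρ * r| := by
      intro ω
      rw [hh_def]
      calc |(∏ t ∈ Finset.Icc 1 k, F t ω) * Real.exp (-(ρ * r * c (k+1) ω)) * c (k+1) ω|
          = |(∏ t ∈ Finset.Icc 1 k, F t ω) * Real.exp (-(ρ * r * c (k+1) ω))| * |c (k+1) ω| :=
            abs_mul _ _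
        _ ≤ (M ^ k * Real.exp |ρ * r|) * 1 :=
            mul_le_mul (hg_abs ω) (hc_abs ω) (abs_nonneg _) (by positivity)
        _ = M ^ k * Real.exp |ρ * r| := mul_one _
    have hh_int : Integrable h μ := hbdd_int h _ (hhm.mono hm le_rfl) hhbd
    have hξ_int : Integrable (ξ (k+1)) μ :=
      hbdd_int _ 1 ((hξmeas (k+1) hk1).mono (ℱ.le (k+1)) le_rfl) hξ_abs
    have hhξ_int : Integrable (h * ξ (k+1)) μ := by
      refine hbdd_int _ (M ^ k * Real.exp |ρ * r|) ?_ fun ω => ?_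
      · exact Measurable.mul (hhm.mono hm le_rfl)
          ((hξmeas (k+1) hk1).mono (ℱ.le (k+1)) le_rfl)
      · calc |(h * ξ (k+1)) ω| = |h ω| * |ξ (k+1) ω| := abs_mul _ _
          _ ≤ (M ^ k * Real.exp |ρ * r|) * 1 :=
              mul_le_mul (hhbd ω) (hξ_abs ω) (abs_nonneg _) (by positivity)
          _ = M ^ k * Real.exp |ρ * r| := mul_one _
    have hkey : ∫ ω, h ω * ξ (k+1) ω ∂μ = ρ * ∫ ω, h ω ∂μ := by
      have h2 : μ[h * ξ (k+1)| 𝒢 (k+1)] =ᵐ[μ] h * μ[ξ (k+1)| 𝒢 (k+1)] :=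
        condExp_mul_of_stronglyMeasurable_left (hhm.stronglyMeasurable) hhξ_int hξ_int
      have h3 : h * μ[ξ (k+1)| 𝒢 (k+1)] =ᵐ[μ] fun ω => h ω * ρ := by
        filter_upwards [hcond (k+1) hk1] with ω hω
        simp [hω]
      calc ∫ ω, h ω * ξ (k+1) ω ∂μ = ∫ ω, (μ[h * ξ (k+1)| 𝒢 (k+1)]) ω ∂μ :=
            (integral_condExp hm).symm
        _ = ∫ ω, h ω * ρ ∂μ := integral_congr_ae (h2.trans h3)
        _ = ρ * ∫ ω, h ω ∂μ := by rw [integral_mul_const, mul_comm]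
    have hsplit : ∀ ω, ∏ t ∈ Finset.Icc 1 (k+1), F t ω =
        (∏ t ∈ Finset.Icc 1 k, F t ω) * Real.exp (-(ρ * r * c (k+1) ω))
          + r * (h ω * ξ (k+1) ω) := by
      intro ω
      rw [Finset.prod_Icc_succ_top hk1, hh_def]
      have : F (k+1) ω = (1 + r * (c (k+1) ω * ξ (k+1) ω)) *
          Real.exp (-(ρ * r * c (k+1) ω)) := rfl
      rw [this]
      ring
    have hg_int : Integrable (fun ω => (∏ t ∈ Finset.Icc 1 k, F t ω) *
        Real.exp (-(ρ * r * c (k+1) ω))) μ := by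
      refine hbdd_int _ (M ^ k * Real.exp |ρ * r|) ?_ (hg_abs)
      exact ((hPmeas k).mono (ℱ.le k) le_rfl).mul (hAm.mono hm le_rfl)
    have hrh_int : Integrable (fun ω => r * (h ω * ξ (k+1) ω)) μ := by
      simpa using hhξ_int.const_mul r
    have hrρh_int : Integrable (fun ω => r * ρ * h ω) μ := hh_int.const_mul (r * ρ)
    calc ∫ ω, ∏ t ∈ Finset.Icc 1 (k+1), F t ω ∂μ
        = ∫ ω, ((∏ t ∈ Finset.Icc 1 k, F t ω) * Real.exp (-(ρ * r * c (k+1) ω))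
            + r * (h ω * ξ (k+1) ω)) ∂μ := integral_congr_ae (ae_of_all _ hsplit)
      _ = (∫ ω, (∏ t ∈ Finset.Icc 1 k, F t ω) * Real.exp (-(ρ * r * c (k+1) ω)) ∂μ)
            + r * ∫ ω, h ω * ξ (k+1) ω ∂μ := by
          rw [integral_add hg_int hrh_int, integral_const_mul]
      _ = (∫ ω, (∏ t ∈ Finset.Icc 1 k, F t ω) * Real.exp (-(ρ * r * c (k+1) ω)) ∂μ)
            + r * ρ * ∫ ω, h ω ∂μ := by rw [hkey]; ring
      _ = ∫ ω, ((∏ t ∈ Finset.Icc 1 k, F t ω) * Real.exp (-(ρ * r * c (k+1) ω))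
            + r * ρ * h ω) ∂μ := by
          rw [integral_add hg_int hrρh_int, integral_const_mul]
      _ ≤ ∫ ω, ∏ t ∈ Finset.Icc 1 k, F t ω ∂μ := by
          apply integral_mono (hg_int.add hrρh_int) (hPint k)
          intro ω
          have hfac : Real.exp (-(ρ * r * c (k+1) ω)) * (1 + r * ρ * c (k+1) ω) ≤ 1 := by
            rcases hcval (k+1) ω with h' | h'
            · rw [h']; simp
            · rw [h', mul_one, mul_one]
              calc Real.exp (-(ρ * r)) * (1 + r * ρ)
                  ≤ Real.exp (-(ρ * r)) * Real.exp (ρ * r) := by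
                    apply mul_le_mul_of_nonneg_left _ (Real.exp_nonneg _)
                    have := Real.add_one_le_exp (ρ * r)
                    linarith
                _ = 1 := by rw [← Real.exp_add]; simp
          calc (∏ t ∈ Finset.Icc 1 k, F t ω) * Real.exp (-(ρ * r * c (k+1) ω))
                + r * ρ * h ω
              = (∏ t ∈ Finset.Icc 1 k, F t ω) *
                  (Real.exp (-(ρ * r * c (k+1) ω)) * (1 + r * ρ * c (k+1) ω)) := by
                rw [hh_def]; ring
            _ ≤ (∏ t ∈ Finset.Icc 1 k, F t ω) * 1 :=
                mul_le_mul_of_nonneg_left hfac (hPnn k ω)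
            _ = ∏ t ∈ Finset.Icc 1 k, F t ω := mul_one _
      _ ≤ 1 := ih

lemma bernoulli_chernoff
    {Ω : Type*} {m0 : MeasurableSpace Ω} (μ : Measure Ω) [IsProbabilityMeasure μ]
    (ℱ : Filtration ℕ m0) (𝒢 : ℕ → MeasurableSpace Ω)
    (ρ : ℝ) (ξ c : ℕ → Ω → ℝ)
    (horder : ∀ t, 1 ≤ t → ℱ (t - 1) ≤ 𝒢 t ∧ 𝒢 t ≤ ℱ t)
    (hξval : ∀ t ω, ξ t ω = 0 ∨ ξ t ω = 1)
    (hcval : ∀ t ω, c t ω = 0 ∨ c t ω = 1)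
    (hcmeas : ∀ t, 1 ≤ t → Measurable[𝒢 t] (c t))
    (hξmeas : ∀ t, 1 ≤ t → Measurable[ℱ t] (ξ t))
    (hcond : ∀ t, 1 ≤ t → μ[ξ t | 𝒢 t] =ᵐ[μ] fun _ => ρ)
    (θ b : ℝ) (T : ℕ) :
    μ {ω | b ≤ θ * (∑ t ∈ Finset.Icc 1 T, c t ω * ξ t ω)
        - ρ * (Real.exp θ - 1) * (∑ t ∈ Finset.Icc 1 T, c t ω)} ≤
      ENNReal.ofReal (Real.exp (-b)) := by
  set r : ℝ := Real.exp θ - 1 with hr_def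
  have hr : -1 ≤ r := by
    have := Real.exp_nonneg θ; rw [hr_def]; linarith
  set Y : Ω → ℝ := fun ω => ∏ t ∈ Finset.Icc 1 T,
    ((1 + r * (c t ω * ξ t ω)) * Real.exp (-(ρ * r * c t ω))) with hY_def
  -- identity : Y ω = exp (θ * Σ cξ - ρ r Σ c)
  have hcξ01 : ∀ t ω, c t ω * ξ t ω = 0 ∨ c t ω * ξ t ω = 1 := by
    intro t ω
    rcases hcval t ω with h | h <;> rcases hξval t ω with h' | h' <;> simp [h, h']
  have hYeq : ∀ ω, Y ω = Real.exp (θ * (∑ t ∈ Finset.Icc 1 T, c t ω * ξ t ω)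
      - ρ * r * (∑ t ∈ Finset.Icc 1 T, c t ω)) := by
    intro ω
    have hfac : ∀ t ∈ Finset.Icc 1 T,
        (1 + r * (c t ω * ξ t ω)) * Real.exp (-(ρ * r * c t ω)) =
          Real.exp (θ * (c t ω * ξ t ω) - ρ * r * c t ω) := by
      intro t _
      have h1 : 1 + r * (c t ω * ξ t ω) = Real.exp (θ * (c t ω * ξ t ω)) := by
        rcases hcξ01 t ω with h | h <;> rw [h] <;> simp [hr_def]
      rw [h1, ← Real.exp_add]
      ring_nf
    calc Y ω = ∏ t ∈ Finset.Icc 1 T, Real.exp (θ * (c t ω * ξ t ω) - ρ * r * c t ω) :=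
          Finset.prod_congr rfl hfac
      _ = Real.exp (∑ t ∈ Finset.Icc 1 T, (θ * (c t ω * ξ t ω) - ρ * r * c t ω)) :=
          (Real.exp_sum _ _).symm
      _ = _ := by
          congr 1
          rw [Finset.sum_sub_distrib, Finset.mul_sum, Finset.mul_sum]
  -- Y is nonneg and integrable? We need integrability of Y for Markov.
  have hYnn : ∀ ω, 0 ≤ Y ω := by
    intro ω
    rw [hYeq ω]; exact Real.exp_nonneg _
  have hint : Integrable Y μ := by
    -- bounded measurable
    set M : ℝ := (1 + |r|) * Real.exp |ρ * r| with hM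
    have hM0 : 0 ≤ M := by positivity
    have hFmeas : ∀ t, 1 ≤ t → Measurable[m0]
        (fun ω => (1 + r * (c t ω * ξ t ω)) * Real.exp (-(ρ * r * c t ω))) := by
      intro t ht
      have hc : Measurable[m0] (c t) := (hcmeas t ht).mono
        (((horder t ht).2).trans (ℱ.le t)) le_rfl
      have hξ : Measurable[m0] (ξ t) := (hξmeas t ht).mono (ℱ.le t) le_rfl
      exact ((measurable_const.add (measurable_const.mul (hc.mul hξ))).mul
        ((Real.measurable_exp.comp ((measurable_const.mul hc).neg))))
    have hYmeas : Measurable[m0] Y := by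
      apply Finset.measurable_prod
      intro t ht
      exact hFmeas t (Finset.mem_Icc.1 ht).1
    refine Integrable.mono' (integrable_const (M ^ T))
      (hYmeas.aestronglyMeasurable : AEStronglyMeasurable Y μ)
      (ae_of_all _ fun ω => ?_)
    rw [Real.norm_eq_abs, abs_of_nonneg (hYnn ω), hY_def]
    calc ∏ t ∈ Finset.Icc 1 T, ((1 + r * (c t ω * ξ t ω)) * Real.exp (-(ρ * r * c t ω)))
        ≤ ∏ t ∈ Finset.Icc 1 T, M := by
          apply Finset.prod_le_prod
          · intro t _
            apply mul_nonneg _ (Real.exp_nonneg _)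
            rcases hcξ01 t ω with h | h <;> rw [h] <;> nlinarith
          · intro t _
            apply mul_le_mul
            · rcases hcξ01 t ω with h | h <;> rw [h]
              · simp [abs_nonneg]
              · simp [le_abs_self]
            · apply Real.exp_le_exp.2
              rcases hcval t ω with h | h <;> rw [h]
              · simpa using abs_nonneg (ρ * r)
              · rw [mul_one]; exact neg_le_abs _
            · exact Real.exp_nonneg _
            · positivity
      _ = M ^ T := by rw [Finset.prod_const, Nat.card_Icc]; simp
  have hEY : ∫ ω, Y ω ∂μ ≤ 1 :=
    bernoulli_prod_integral_le_one μ ℱ 𝒢 ρ ξ c horder hξval hcval hcmeas hξmeas hcond r hr T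
  -- Markov
  have hsub : {ω | b ≤ θ * (∑ t ∈ Finset.Icc 1 T, c t ω * ξ t ω)
      - ρ * (Real.exp θ - 1) * (∑ t ∈ Finset.Icc 1 T, c t ω)} ⊆
      {ω | Real.exp b ≤ Y ω} := by
    intro ω hω
    rw [Set.mem_setOf_eq] at hω ⊢
    rw [hYeq ω]
    apply Real.exp_le_exp.2
    calc b ≤ _ := hω
      _ = θ * (∑ t ∈ Finset.Icc 1 T, c t ω * ξ t ω)
          - ρ * r * (∑ t ∈ Finset.Icc 1 T, c t ω) := by rw [hr_def]
  have hmarkov := mul_meas_ge_le_integral_of_nonneg (ae_of_all μ hYnn) hint (Real.exp b)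
  have hfin : μ {ω | Real.exp b ≤ Y ω} ≠ ⊤ := measure_ne_top μ _
  have htoreal : (μ {ω | Real.exp b ≤ Y ω}).toReal ≤ Real.exp (-b) := by
    have hpos : (0:ℝ) < Real.exp b := Real.exp_pos b
    rw [Real.exp_neg, ← one_div, le_div_iff₀ hpos]
    calc (μ {ω | Real.exp b ≤ Y ω}).toReal * Real.exp b
        = Real.exp b * (μ {ω | Real.exp b ≤ Y ω}).toReal := mul_comm _ _
      _ ≤ ∫ ω, Y ω ∂μ := hmarkov
      _ ≤ 1 := hEY
  calc μ {ω | b ≤ θ * (∑ t ∈ Finset.Icc 1 T, c t ω * ξ t ω)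
      - ρ * (Real.exp θ - 1) * (∑ t ∈ Finset.Icc 1 T, c t ω)}
      ≤ μ {ω | Real.exp b ≤ Y ω} := measure_mono hsub
    _ ≤ ENNReal.ofReal (Real.exp (-b)) := by
        rw [ENNReal.le_ofReal_iff_toReal_le hfin (Real.exp_nonneg _)]
        exact htoreal


open Real

lemma density_close (ρ T ε N n nS : ℝ)
    (hρ0 : 0 < ρ) (hT : 0 < T) (hε : 0 < ε) (hε1 : ε < 1)
    (hN : N ≤ T) (hnS0 : 0 ≤ nS) (hnSN : nS ≤ N) (hnSn : nS ≤ n) (hcompl : n - nS ≤ T - N)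
    (h1 : n < (1 + ε/2) * (ρ*T))
    (h2 : (1 - ε/2) * (ρ*T) < n)
    (h3 : nS - ρ*N < ε/2 * (ρ*T))
    (h4 : ρ*N - nS < ε/2 * (ρ*T)) :
    |N / T - nS / n| < ε := by
  have hN0 : 0 ≤ N := le_trans hnS0 hnSN
  have hn0 : 0 < n := by nlinarith
  have hdiff : N / T - nS / n = (N * n - T * nS) / (T * n) := by
    field_simp
  rw [hdiff, abs_div, abs_of_pos (by positivity : (0:ℝ) < T * n),
    div_lt_iff₀ (by positivity : (0:ℝ) < T * n), abs_lt]
  constructor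
  · rcases le_or_gt (ρ * T) n with hc | hc
    · nlinarith [mul_nonneg hN0 (sub_nonneg.2 hc)]
    · rcases le_or_gt (ε * T) (T - N) with hd | hd
      · nlinarith [mul_le_mul_of_nonneg_right hd (le_of_lt (sub_pos.2 hc)),
          mul_nonneg (sub_nonneg.2 hN) (le_of_lt (sub_pos.2 hc))]
      · nlinarith [mul_nonneg (le_of_lt hT) (sub_nonneg.2 hnSn),
          mul_lt_mul_of_pos_right hd hn0]
  · rcases le_or_gt n (ρ * T) with hc | hc
    · nlinarith [mul_nonneg hN0 (sub_nonneg.2 hc)]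
    · nlinarith [mul_nonneg (sub_nonneg.2 hN) (le_of_lt (sub_pos.2 hc))]

lemma chern_arith_pos (ρ T ε X K : ℝ) (hρ : 0 ≤ ρ) (hT : 0 ≤ T)
    (hε : 0 < ε) (hε1 : ε ≤ 1) (hK0 : 0 ≤ K) (hKT : K ≤ T)
    (hdev : ε/2 * (ρ*T) ≤ X - ρ*K) :
    9/88 * ε^2 * (ρ*T) ≤ (9/22*ε) * X - ρ * (Real.exp (9/22*ε) - 1) * K := by
  have hlam_half : |(9/22*ε : ℝ)| ≤ 1/2 := by
    rw [abs_of_pos (by positivity)]; linarith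
  have hq1 : Real.exp (9/22*ε) - 1 - 9/22*ε ≤ 11/18 * (9/22*ε)^2 := by
    have := exp_quad_bound hlam_half
    linarith
  have hq0 : 0 ≤ Real.exp (9/22*ε) - 1 - 9/22*ε := by
    have := Real.add_one_le_exp (9/22*ε); linarith
  have hKq : ρ * K * (Real.exp (9/22*ε) - 1 - 9/22*ε) ≤ ρ * T * (11/18 * (9/22*ε)^2) := by
    apply mul_le_mul (by nlinarith) hq1 hq0 (by positivity)
  have hXdev : (9/22*ε) * (ρ*K + ε/2 * (ρ*T)) ≤ (9/22*ε) * X := by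
    apply mul_le_mul_of_nonneg_left _ (by positivity)
    linarith
  nlinarith [hKq, hXdev]

lemma chern_arith_neg (ρ T ε X K : ℝ) (hρ : 0 ≤ ρ) (hT : 0 ≤ T)
    (hε : 0 < ε) (hε1 : ε ≤ 1) (hK0 : 0 ≤ K) (hKT : K ≤ T)
    (hdev : ε/2 * (ρ*T) ≤ ρ*K - X) :
    9/88 * ε^2 * (ρ*T) ≤ (-(9/22*ε)) * X - ρ * (Real.exp (-(9/22*ε)) - 1) * K := by
  have hlam_half : |(-(9/22*ε) : ℝ)| ≤ 1/2 := by
    rw [abs_neg, abs_of_pos (by positivity)]; linarith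
  have hq1 : Real.exp (-(9/22*ε)) - 1 + 9/22*ε ≤ 11/18 * (9/22*ε)^2 := by
    have := exp_quad_bound hlam_half
    nlinarith [this]
  have hq0 : 0 ≤ Real.exp (-(9/22*ε)) - 1 + 9/22*ε := by
    have := Real.add_one_le_exp (-(9/22*ε)); linarith
  have hKq : ρ * K * (Real.exp (-(9/22*ε)) - 1 + 9/22*ε) ≤ ρ * T * (11/18 * (9/22*ε)^2) := by
    apply mul_le_mul (by nlinarith) hq1 hq0 (by positivity)
  have hXdev : (9/22*ε) * (ρ*K - X) ≥ (9/22*ε) * (ε/2 * (ρ*T)) := by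
    apply mul_le_mul_of_nonneg_left hdev (by positivity)
  nlinarith [hKq, hXdev]

/-- Bernoulli sampling of a (possibly adaptive) stream of length `T` with retention
probability `ρ ≥ 10·ln(4/δ)/(ε²T)` is `(ε,δ)`-representative for any fixed set `S`:
with probability at least `1 − δ`, the density of `S` in the sample is within `ε` of
its density in the full stream. `s t` is the indicator that the `t`-th element lies
in `S`, `ξ t` the indicator that it is retained. -/
theorem bernoulli_sampling_representative
    {Ω : Type*} {m0 : MeasurableSpace Ω} (μ : Measure Ω) [IsProbabilityMeasure μ]
    (ℱ : Filtration ℕ m0) (𝒢 : ℕ → MeasurableSpace Ω)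
    (ρ : ℝ) (hρ : ρ ∈ Set.Ioo (0:ℝ) 1) (T : ℕ) (hT : 0 < T)
    (s ξ : ℕ → Ω → ℝ)
    (horder : ∀ t, 1 ≤ t → ℱ (t - 1) ≤ 𝒢 t ∧ 𝒢 t ≤ ℱ t)
    (hsval : ∀ t ω, s t ω = 0 ∨ s t ω = 1)
    (hξval : ∀ t ω, ξ t ω = 0 ∨ ξ t ω = 1)
    (hsmeas : ∀ t, 1 ≤ t → Measurable[𝒢 t] (s t))
    (hξmeas : ∀ t, 1 ≤ t → Measurable[ℱ t] (ξ t))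
    (hcond : ∀ t, 1 ≤ t → μ[ξ t | 𝒢 t] =ᵐ[μ] fun _ => ρ)
    (δ ε : ℝ) (hδ : δ ∈ Set.Ioo (0:ℝ) 1) (hε : ε ∈ Set.Ioo (0:ℝ) 1)
    (hρbound : 10 * Real.log (4 / δ) / (ε ^ 2 * T) ≤ ρ) :
    μ {ω | ε ≤
        |(∑ t ∈ Finset.Icc 1 T, s t ω) / T -
          (∑ t ∈ Finset.Icc 1 T, s t ω * ξ t ω) / (∑ t ∈ Finset.Icc 1 T, ξ t ω)|} ≤
      ENNReal.ofReal δ := by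
  obtain ⟨hρ0, hρ1⟩ := hρ
  obtain ⟨hδ0, hδ1⟩ := hδ
  obtain ⟨hε0, hε1⟩ := hε
  have hT0 : (0:ℝ) < T := Nat.cast_pos.2 hT
  -- basic pointwise facts
  have hs01 : ∀ t ω, 0 ≤ s t ω ∧ s t ω ≤ 1 := by
    intro t ω; rcases hsval t ω with h | h <;> rw [h] <;> norm_num
  have hξ01 : ∀ t ω, 0 ≤ ξ t ω ∧ ξ t ω ≤ 1 := by
    intro t ω; rcases hξval t ω with h | h <;> rw [h] <;> norm_num
  have hNle : ∀ ω, (∑ t ∈ Finset.Icc 1 T, s t ω) ≤ T := by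
    intro ω
    calc (∑ t ∈ Finset.Icc 1 T, s t ω) ≤ ∑ t ∈ Finset.Icc 1 T, (1:ℝ) :=
          Finset.sum_le_sum fun t _ => (hs01 t ω).2
      _ = T := by rw [Finset.sum_const, Nat.card_Icc]; simp
  have hN0 : ∀ ω, 0 ≤ ∑ t ∈ Finset.Icc 1 T, s t ω := fun ω =>
    Finset.sum_nonneg fun t _ => (hs01 t ω).1
  have hnS0 : ∀ ω, 0 ≤ ∑ t ∈ Finset.Icc 1 T, s t ω * ξ t ω := fun ω =>
    Finset.sum_nonneg fun t _ => mul_nonneg (hs01 t ω).1 (hξ01 t ω).1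
  have hnSN : ∀ ω, (∑ t ∈ Finset.Icc 1 T, s t ω * ξ t ω) ≤ ∑ t ∈ Finset.Icc 1 T, s t ω := by
    intro ω
    apply Finset.sum_le_sum
    intro t _
    nlinarith [(hs01 t ω).1, (hξ01 t ω).2]
  have hnSn : ∀ ω, (∑ t ∈ Finset.Icc 1 T, s t ω * ξ t ω) ≤ ∑ t ∈ Finset.Icc 1 T, ξ t ω := by
    intro ω
    apply Finset.sum_le_sum
    intro t _
    nlinarith [(hξ01 t ω).1, (hs01 t ω).2]
  have hcompl : ∀ ω, (∑ t ∈ Finset.Icc 1 T, ξ t ω) - (∑ t ∈ Finset.Icc 1 T, s t ω * ξ t ω) ≤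
      (T:ℝ) - ∑ t ∈ Finset.Icc 1 T, s t ω := by
    intro ω
    have h := Finset.sum_le_sum (s := Finset.Icc 1 T)
      (f := fun t => ξ t ω - s t ω * ξ t ω) (g := fun t => 1 - s t ω) ?_
    · rw [Finset.sum_sub_distrib, Finset.sum_sub_distrib, Finset.sum_const, Nat.card_Icc] at h
      simpa using h
    · intro t _
      show ξ t ω - s t ω * ξ t ω ≤ 1 - s t ω
      nlinarith [(hξ01 t ω).2, (hs01 t ω).2,
        mul_nonneg (sub_nonneg.2 (hs01 t ω).2) (sub_nonneg.2 (hξ01 t ω).2)]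
  -- deviation events
  set b : ℝ := 9/88 * ε^2 * (ρ * T) with hb_def
  set D1 : Set Ω := {ω | (1 + ε/2) * (ρ*T) ≤ ∑ t ∈ Finset.Icc 1 T, ξ t ω} with hD1
  set D2 : Set Ω := {ω | (∑ t ∈ Finset.Icc 1 T, ξ t ω) ≤ (1 - ε/2) * (ρ*T)} with hD2
  set D3 : Set Ω := {ω | ε/2 * (ρ*T) ≤ (∑ t ∈ Finset.Icc 1 T, s t ω * ξ t ω)
      - ρ * ∑ t ∈ Finset.Icc 1 T, s t ω} with hD3
  set D4 : Set Ω := {ω | ε/2 * (ρ*T) ≤ ρ * (∑ t ∈ Finset.Icc 1 T, s t ω)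
      - ∑ t ∈ Finset.Icc 1 T, s t ω * ξ t ω} with hD4
  -- step A : inclusion in the union
  have hsubset : {ω | ε ≤
      |(∑ t ∈ Finset.Icc 1 T, s t ω) / T -
        (∑ t ∈ Finset.Icc 1 T, s t ω * ξ t ω) / (∑ t ∈ Finset.Icc 1 T, ξ t ω)|} ⊆
      D1 ∪ D2 ∪ D3 ∪ D4 := by
    intro ω hω
    rw [Set.mem_setOf_eq] at hω
    by_contra hno
    simp only [hD1, hD2, hD3, hD4, Set.mem_union, Set.mem_setOf_eq, not_or, not_le] at hno
    obtain ⟨⟨⟨g1, g2⟩, g3⟩, g4⟩ := hno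
    have := density_close ρ T ε (∑ t ∈ Finset.Icc 1 T, s t ω)
      (∑ t ∈ Finset.Icc 1 T, ξ t ω) (∑ t ∈ Finset.Icc 1 T, s t ω * ξ t ω)
      hρ0 hT0 hε0 hε1 (hNle ω) (hnS0 ω) (hnSN ω) (hnSn ω) (hcompl ω) g1 g2 g3 g4
    exact absurd hω (not_le.2 this)
  -- step B : Chernoff bound for each event
  have hone_sum : ∀ ω : Ω, (∑ t ∈ Finset.Icc 1 T, (1:ℝ)) = (T:ℝ) := by
    intro ω; rw [Finset.sum_const, Nat.card_Icc]; simp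
  have hD1sub : D1 ⊆ {ω | b ≤ (9/22*ε) * (∑ t ∈ Finset.Icc 1 T, (fun _ (_ : Ω) => (1:ℝ)) t ω * ξ t ω)
      - ρ * (Real.exp (9/22*ε) - 1) * (∑ t ∈ Finset.Icc 1 T, (fun _ (_ : Ω) => (1:ℝ)) t ω)} := by
    intro ω hω
    rw [hD1, Set.mem_setOf_eq] at hω
    simp only [Set.mem_setOf_eq, one_mul, hone_sum ω]
    rw [hb_def]
    exact chern_arith_pos ρ T ε _ T (le_of_lt hρ0) (le_of_lt hT0) hε0 (le_of_lt hε1)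
      (le_of_lt hT0) le_rfl (by linarith)
  have hD2sub : D2 ⊆ {ω | b ≤ (-(9/22*ε)) * (∑ t ∈ Finset.Icc 1 T, (fun _ (_ : Ω) => (1:ℝ)) t ω * ξ t ω)
      - ρ * (Real.exp (-(9/22*ε)) - 1) * (∑ t ∈ Finset.Icc 1 T, (fun _ (_ : Ω) => (1:ℝ)) t ω)} := by
    intro ω hω
    rw [hD2, Set.mem_setOf_eq] at hω
    simp only [Set.mem_setOf_eq, one_mul, hone_sum ω]
    rw [hb_def]
    exact chern_arith_neg ρ T ε _ T (le_of_lt hρ0) (le_of_lt hT0) hε0 (le_of_lt hε1)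
      (le_of_lt hT0) le_rfl (by linarith)
  have hD3sub : D3 ⊆ {ω | b ≤ (9/22*ε) * (∑ t ∈ Finset.Icc 1 T, s t ω * ξ t ω)
      - ρ * (Real.exp (9/22*ε) - 1) * (∑ t ∈ Finset.Icc 1 T, s t ω)} := by
    intro ω hω
    rw [hD3, Set.mem_setOf_eq] at hω
    rw [Set.mem_setOf_eq, hb_def]
    exact chern_arith_pos ρ T ε _ _ (le_of_lt hρ0) (le_of_lt hT0) hε0 (le_of_lt hε1)
      (hN0 ω) (hNle ω) (by linarith)
  have hD4sub : D4 ⊆ {ω | b ≤ (-(9/22*ε)) * (∑ t ∈ Finset.Icc 1 T, s t ω * ξ t ω)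
      - ρ * (Real.exp (-(9/22*ε)) - 1) * (∑ t ∈ Finset.Icc 1 T, s t ω)} := by
    intro ω hω
    rw [hD4, Set.mem_setOf_eq] at hω
    rw [Set.mem_setOf_eq, hb_def]
    exact chern_arith_neg ρ T ε _ _ (le_of_lt hρ0) (le_of_lt hT0) hε0 (le_of_lt hε1)
      (hN0 ω) (hNle ω) (by linarith)
  have hone_val : ∀ (t : ℕ) (ω : Ω), (fun (_ : ℕ) (_ : Ω) => (1:ℝ)) t ω = 0 ∨ (fun (_ : ℕ) (_ : Ω) => (1:ℝ)) t ω = 1 :=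
    fun _ _ => Or.inr rfl
  have hone_meas : ∀ t, 1 ≤ t → Measurable[𝒢 t] ((fun _ (_ : Ω) => (1:ℝ)) t) :=
    fun t _ => measurable_const
  have hsmeas' : ∀ t, 1 ≤ t → Measurable[𝒢 t] (s t) := hsmeas
  have hC1 := bernoulli_chernoff μ ℱ 𝒢 ρ ξ (fun _ _ => (1:ℝ)) horder hξval hone_val
    hone_meas hξmeas hcond (9/22*ε) b T
  have hC2 := bernoulli_chernoff μ ℱ 𝒢 ρ ξ (fun _ _ => (1:ℝ)) horder hξval hone_val
    hone_meas hξmeas hcond (-(9/22*ε)) b T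
  have hC3 := bernoulli_chernoff μ ℱ 𝒢 ρ ξ s horder hξval hsval hsmeas' hξmeas hcond
    (9/22*ε) b T
  have hC4 := bernoulli_chernoff μ ℱ 𝒢 ρ ξ s horder hξval hsval hsmeas' hξmeas hcond
    (-(9/22*ε)) b T
  -- the exponential bound on exp(-b)
  have hL0 : 0 < Real.log (4/δ) := Real.log_pos (by rw [lt_div_iff₀ hδ0]; linarith)
  have hbL : Real.log (4/δ) ≤ b := by
    rw [div_le_iff₀ (by positivity : (0:ℝ) < ε^2 * T)] at hρbound
    rw [hb_def]
    nlinarith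
  have hexp_b : Real.exp (-b) ≤ δ/4 := by
    have h1 : Real.exp (-b) ≤ Real.exp (-(Real.log (4/δ))) :=
      Real.exp_le_exp.2 (by linarith)
    have h2 : Real.exp (-(Real.log (4/δ))) = δ/4 := by
      rw [Real.exp_neg, Real.exp_log (by positivity)]
      rw [inv_div]
    linarith
  have hμD : ∀ (D : Set Ω), μ D ≤ ENNReal.ofReal (Real.exp (-b)) → μ D ≤ ENNReal.ofReal (δ/4) := by
    intro D h
    exact h.trans (ENNReal.ofReal_le_ofReal hexp_b)
  have hμ1 : μ D1 ≤ ENNReal.ofReal (δ/4) := hμD D1 ((measure_mono hD1sub).trans hC1)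
  have hμ2 : μ D2 ≤ ENNReal.ofReal (δ/4) := hμD D2 ((measure_mono hD2sub).trans hC2)
  have hμ3 : μ D3 ≤ ENNReal.ofReal (δ/4) := hμD D3 ((measure_mono hD3sub).trans hC3)
  have hμ4 : μ D4 ≤ ENNReal.ofReal (δ/4) := hμD D4 ((measure_mono hD4sub).trans hC4)
  calc μ {ω | ε ≤
      |(∑ t ∈ Finset.Icc 1 T, s t ω) / T -
        (∑ t ∈ Finset.Icc 1 T, s t ω * ξ t ω) / (∑ t ∈ Finset.Icc 1 T, ξ t ω)|}
      ≤ μ (D1 ∪ D2 ∪ D3 ∪ D4) := measure_mono hsubset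
    _ ≤ μ (D1 ∪ D2 ∪ D3) + μ D4 := measure_union_le _ _
    _ ≤ (μ (D1 ∪ D2) + μ D3) + μ D4 := by
        exact add_le_add (measure_union_le _ _) le_rfl
    _ ≤ ((μ D1 + μ D2) + μ D3) + μ D4 := by
        exact add_le_add (add_le_add (measure_union_le _ _) le_rfl) le_rfl
    _ ≤ ((ENNReal.ofReal (δ/4) + ENNReal.ofReal (δ/4)) + ENNReal.ofReal (δ/4))
          + ENNReal.ofReal (δ/4) := by
        exact add_le_add (add_le_add (add_le_add hμ1 hμ2) hμ3) hμ4
    _ = ENNReal.ofReal δ := by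
        rw [← ENNReal.ofReal_add (by linarith) (by linarith),
          ← ENNReal.ofReal_add (by linarith) (by linarith),
          ← ENNReal.ofReal_add (by linarith) (by linarith)]
        congr 1
        ring
end

section
/- For reservoir sampling with reservoir size ρ over an adaptively generated stream of length T, define Z_t = (t/ρ)|S ∩ reservoir_t| − |S ∩ C_t| for t > ρ (and Z_t = 0 for t ≤ ρ). Then (Z_t) is a martingale whose increments satisfy |Z_t − Z_{t-1}| ≤ t/ρ and whose conditional variance at step t is at most t/ρ. Consequently, if ρ ≥ (2/ε²)·ln(2/δ), then P(|d_S(C_T) − d_S(reservoir_T)| ≥ ε) ≤ δ. -/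
set_option maxHeartbeats 2000000

open MeasureTheory Filter Set

lemma integrable_of_abs_le' {Ω : Type*} {m0 : MeasurableSpace Ω} {μ : Measure Ω}
    [IsFiniteMeasure μ] {f : Ω → ℝ} (hf : AEStronglyMeasurable f μ) {C : ℝ}
    (h : ∀ ω, |f ω| ≤ C) : Integrable f μ :=
  Integrable.mono' (integrable_const C) hf (ae_of_all _ h)

lemma exp_cubic_bound {y u : ℝ} (h : |y| ≤ u) (hu : u ≤ 1) :
    Real.exp y ≤ 1 + y + y ^ 2 / 2 + 2 / 9 * (u * y ^ 2) := by
  have h1 : |y| ≤ 1 := h.trans hu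
  have hb := Real.exp_bound h1 (n := 3) (by norm_num)
  have hs : ∑ m ∈ Finset.range 3, y ^ m / (Nat.factorial m) = 1 + y + y ^ 2 / 2 := by
    simp [Finset.sum_range_succ, Nat.factorial]
  rw [hs] at hb
  have h3 : |y| ^ 3 ≤ u * y ^ 2 := by
    have h2 : |y| ^ 3 = |y| * y ^ 2 := by
      rw [pow_succ, sq_abs]; ring
    rw [h2]
    nlinarith [abs_nonneg y, sq_nonneg y]
  have hb' := (abs_le.mp hb).2
  norm_num [Nat.factorial] at hb'
  nlinarith [abs_nonneg y]

lemma W_bound {b r2 m sv : ℝ} (hb : 0 < b) (hbr : b * r2 = 1) (hm0 : 0 ≤ m) (hm1 : m ≤ 1)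
    (hs : sv = 0 ∨ sv = 1) :
    (b^2*sv + 2*(m - sv)*b*sv + (b^2 - 2*b^2*sv - 2*(m - sv)*b)*m) * r2 + (m - sv)^2 ≤ b := by
  rcases hs with h|h <;> subst h
  · have e : (b^2*0 + 2*(m - 0)*b*0 + (b^2 - 2*b^2*0 - 2*(m - 0)*b)*m) * r2
        = (b*m - 2*m^2) * (b * r2) := by ring
    rw [e, hbr]
    nlinarith [sq_nonneg m, mul_le_mul_of_nonneg_left hm1 hb.le]
  · have e : (b^2*1 + 2*(m - 1)*b*1 + (b^2 - 2*b^2*1 - 2*(m - 1)*b)*m) * r2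
        = (b*(1-m) - 2*(1-m)^2) * (b * r2) := by ring
    rw [e, hbr]
    nlinarith [sq_nonneg (1-m), mul_nonneg hb.le hm0]

lemma freedman_aux {Ω : Type*} {m0 : MeasurableSpace Ω} (μ : Measure Ω) [IsProbabilityMeasure μ]
    (ℱ : Filtration ℕ m0) (Z : ℕ → Ω → ℝ) (ρ T : ℕ) (hρ : 0 < ρ) (hρT : ρ < T)
    (lam u : ℝ) (hlam : 0 < lam) (hu : lam * T / ρ ≤ u) (hu1 : u ≤ 1)
    (hadp : ∀ n, StronglyMeasurable[ℱ n] (Z n))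
    (hZρ : ∀ ω, Z ρ ω = 0)
    (hbnd : ∀ n, ρ ≤ n → n < T → ∀ ω, |Z (n+1) ω - Z n ω| ≤ ((n : ℝ)+1)/ρ)
    (hmart : ∀ n, ρ ≤ n → n < T → μ[fun ω => Z (n+1) ω - Z n ω|ℱ n] =ᵐ[μ] 0)
    (hvar : ∀ n, ρ ≤ n → n < T →
      μ[fun ω => (Z (n+1) ω - Z n ω)^2|ℱ n] ≤ᵐ[μ] (fun _ => ((n : ℝ)+1)/ρ))
    (a : ℝ) (ha : 0 < a) :
    μ {ω | a ≤ Z T ω} ≤ ENNReal.ofReal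
      (Real.exp ((1/2 + 2*u/9) * lam^2 * (((T : ℝ)*((T : ℝ)+1) - (ρ : ℝ)*((ρ : ℝ)+1))/(2*ρ))
        - lam * a)) := by
  have hρR : (0:ℝ) < ρ := by exact_mod_cast hρ
  have hTR : (0:ℝ) < T := by exact_mod_cast hρ.trans hρT
  have hu0 : 0 < u := lt_of_lt_of_le (by positivity) hu
  set C : ℝ := 1/2 + 2*u/9 with hC
  have hC0 : 0 < C := by positivity
  -- boundedness of Z n
  have Zbnd : ∀ n, ρ ≤ n → n ≤ T → ∀ ω, |Z n ω| ≤ (n : ℝ)*((n : ℝ)+1)/ρ := by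
    intro n hn
    induction n, hn using Nat.le_induction with
    | base => intro _ ω; rw [hZρ ω]; simp; positivity
    | succ n hn ih =>
      intro hnT ω
      have h1 : |Z n ω| ≤ (n : ℝ)*((n : ℝ)+1)/ρ := ih (by omega) ω
      have h2 : |Z (n+1) ω - Z n ω| ≤ ((n : ℝ)+1)/ρ := hbnd n hn (by omega) ω
      have h3 : |Z (n+1) ω| ≤ |Z n ω| + |Z (n+1) ω - Z n ω| := by
        have := abs_add_le (Z n ω) (Z (n+1) ω - Z n ω); simpa using this
      push_cast
      have hnn : (0:ℝ) ≤ (n:ℝ) := Nat.cast_nonneg n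
      calc |Z (n+1) ω| ≤ (n : ℝ)*((n : ℝ)+1)/ρ + ((n : ℝ)+1)/ρ := by linarith
        _ ≤ ((n : ℝ)+1)*((n : ℝ)+1+1)/ρ := by
            rw [← add_div, div_le_div_iff₀ hρR hρR]; nlinarith
  -- integrability of exp(lam * Z n)
  have hintexp : ∀ n, ρ ≤ n → n ≤ T → Integrable (fun ω => Real.exp (lam * Z n ω)) μ := by
    intro n hn hnT
    refine integrable_of_abs_le' (C := Real.exp (lam * ((n : ℝ)*((n : ℝ)+1)/ρ))) ?_ ?_
    · exact (Real.continuous_exp.comp_stronglyMeasurable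
        (((hadp n).mono (ℱ.le n)).const_mul lam)).aestronglyMeasurable
    · intro ω
      rw [abs_of_pos (Real.exp_pos _)]
      refine Real.exp_le_exp.2 ?_
      have := (abs_le.mp (Zbnd n hn hnT ω)).2
      nlinarith
  have hmeas : ∀ n, AEStronglyMeasurable (Z n) μ :=
    fun n => ((hadp n).mono (ℱ.le n)).aestronglyMeasurable
  -- key induction
  have key : ∀ n, ρ ≤ n → n ≤ T → ∫ ω, Real.exp (lam * Z n ω) ∂μ ≤
      Real.exp (C * lam^2 * (((n : ℝ)*((n : ℝ)+1) - (ρ : ℝ)*((ρ : ℝ)+1))/(2*ρ))) := by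
    intro n hn
    induction n, hn using Nat.le_induction with
    | base =>
      intro _
      simp only [hZρ, mul_zero, Real.exp_zero]
      rw [integral_const]
      simp only [measure_univ, ENNReal.toReal_one, smul_eq_mul, one_mul]
      simpa using Real.one_le_exp (x := C * lam^2 * (((ρ:ℝ)*((ρ:ℝ)+1) - (ρ:ℝ)*((ρ:ℝ)+1))/(2*ρ))) (by simp)
    | succ n hn ih =>
      intro hnT
      have hnT' : n < T := by omega
      have hnT'' : n ≤ T := by omega
      set X : Ω → ℝ := fun ω => Z (n+1) ω - Z n ω with hXdef
      have hXmeas : AEStronglyMeasurable X μ := (hmeas (n+1)).sub (hmeas n)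
      have hXb : ∀ ω, |X ω| ≤ ((n : ℝ)+1)/ρ := hbnd n hn hnT'
      have hintX : Integrable X μ := integrable_of_abs_le' hXmeas hXb
      have hintX2 : Integrable (fun ω => X ω^2) μ := by
        refine integrable_of_abs_le' (C := (((n : ℝ)+1)/ρ)^2) (hXmeas.pow 2) ?_
        intro ω
        rw [abs_pow]
        exact pow_le_pow_left₀ (abs_nonneg _) (hXb ω) 2
      have hlamXu : ∀ ω, |lam * X ω| ≤ u := by
        intro ω
        rw [abs_mul, abs_of_pos hlam]
        calc lam * |X ω| ≤ lam * (((n : ℝ)+1)/ρ) :=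
              mul_le_mul_of_nonneg_left (hXb ω) hlam.le
          _ ≤ lam * ((T : ℝ)/ρ) := by
              gcongr
              exact_mod_cast hnT
          _ ≤ u := by rw [← mul_div_assoc]; exact hu
      set c2 : ℝ := C * lam^2 with hc2
      have hc20 : 0 ≤ c2 := by positivity
      set G : Ω → ℝ := (fun _ => (1:ℝ)) + lam • X + c2 • (fun ω => X ω ^ 2) with hGdef
      have hintG1 : Integrable ((fun _ => (1:ℝ)) + lam • X) μ :=
        (integrable_const 1).add (hintX.smul lam)
      have hintG2 : Integrable (c2 • fun ω => X ω ^ 2) μ := hintX2.smul c2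
      have hintG : Integrable G μ := hintG1.add hintG2
      have hpoint : ∀ ω, Real.exp (lam * X ω) ≤ G ω := by
        intro ω
        have h0 := exp_cubic_bound (hlamXu ω) hu1
        have : G ω = 1 + lam * X ω + c2 * X ω^2 := by
          simp [hGdef, smul_eq_mul]
        rw [this, hc2, hC]
        nlinarith [sq_nonneg (lam * X ω)]
      have hintexpX : Integrable (fun ω => Real.exp (lam * X ω)) μ := by
        refine integrable_of_abs_le' (C := Real.exp u) ?_ fun ω => ?_
        · exact (Real.continuous_exp.comp_aestronglyMeasurable
            (hXmeas.const_mul lam))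
        · rw [abs_of_pos (Real.exp_pos _)]
          exact Real.exp_le_exp.2 ((le_abs_self _).trans (hlamXu ω))
      set K : ℝ := Real.exp (c2 * (((n : ℝ)+1)/ρ)) with hK
      -- conditional expectation bound
      have h1 : μ[fun ω => Real.exp (lam * X ω)|ℱ n] ≤ᵐ[μ] μ[G|ℱ n] :=
        condExp_mono hintexpX hintG (ae_of_all _ hpoint)
      have h2 : μ[G|ℱ n] =ᵐ[μ]
          fun ω => 1 + lam * (μ[X|ℱ n]) ω + c2 * (μ[fun ω => X ω^2|ℱ n]) ω := by
        calc μ[G|ℱ n]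
            =ᵐ[μ] μ[(fun _ => (1:ℝ)) + lam • X|ℱ n] + μ[c2 • fun ω => X ω^2|ℱ n] :=
              condExp_add hintG1 hintG2 _
          _ =ᵐ[μ] (μ[(fun _ => (1:ℝ))|ℱ n] + μ[lam • X|ℱ n]) + μ[c2 • fun ω => X ω^2|ℱ n] :=
              (condExp_add (integrable_const 1) (hintX.smul lam) _).add EventuallyEq.rfl
          _ =ᵐ[μ] fun ω => 1 + lam * (μ[X|ℱ n]) ω + c2 * (μ[fun ω => X ω^2|ℱ n]) ω := by
              have e1 : μ[(fun _ => (1:ℝ))|ℱ n] = fun _ => (1:ℝ) := condExp_const (ℱ.le n) 1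
              have e2 : μ[lam • X|ℱ n] =ᵐ[μ] lam • μ[X|ℱ n] := condExp_smul lam X _
              have e3 : μ[c2 • fun ω => X ω^2|ℱ n] =ᵐ[μ] c2 • μ[fun ω => X ω^2|ℱ n] :=
                condExp_smul c2 _ _
              filter_upwards [e2, e3] with ω h2 h3
              simp only [Pi.add_apply, h2, h3, e1, Pi.smul_apply, smul_eq_mul]
      have hcexp : μ[fun ω => Real.exp (lam * X ω)|ℱ n] ≤ᵐ[μ] fun _ => K := by
        filter_upwards [h1, h2, hmart n hn hnT', hvar n hn hnT'] with ω hω1 hω2 hω3 hω4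
        rw [hω2] at hω1
        have : (μ[X|ℱ n]) ω = 0 := hω3
        rw [this] at hω1
        have hle : (μ[fun ω => Real.exp (lam * X ω)|ℱ n]) ω ≤ 1 + c2 * (((n : ℝ)+1)/ρ) := by
          have := mul_le_mul_of_nonneg_left hω4 hc20
          simpa using hω1.trans (by linarith)
        exact hle.trans (by rw [hK]; linarith [Real.add_one_le_exp (c2 * (((n : ℝ)+1)/ρ))])
      -- pull-out and integrate
      have hprod : (fun ω => Real.exp (lam * Z (n+1) ω)) =
          (fun ω => Real.exp (lam * Z n ω)) * fun ω => Real.exp (lam * X ω) := by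
        funext ω
        simp only [Pi.mul_apply, ← Real.exp_add, hXdef]
        congr 1; ring
      have hZn1int : Integrable (fun ω => Real.exp (lam * Z (n+1) ω)) μ :=
        hintexp (n+1) (by omega) hnT
      have hpull : μ[fun ω => Real.exp (lam * Z (n+1) ω)|ℱ n] =ᵐ[μ]
          (fun ω => Real.exp (lam * Z n ω)) * μ[fun ω => Real.exp (lam * X ω)|ℱ n] := by
        rw [hprod]
        exact condExp_mul_of_stronglyMeasurable_left
          (Real.continuous_exp.comp_stronglyMeasurable ((hadp n).const_mul lam))
          (by rw [← hprod]; exact hZn1int) hintexpX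
      have step : ∫ ω, Real.exp (lam * Z (n+1) ω) ∂μ ≤
          K * Real.exp (C * lam^2 * (((n : ℝ)*((n : ℝ)+1) - (ρ : ℝ)*((ρ : ℝ)+1))/(2*ρ))) := by
        calc ∫ ω, Real.exp (lam * Z (n+1) ω) ∂μ
            = ∫ ω, (μ[fun ω => Real.exp (lam * Z (n+1) ω)|ℱ n]) ω ∂μ :=
              (integral_condExp (ℱ.le n)).symm
          _ ≤ ∫ ω, Real.exp (lam * Z n ω) * K ∂μ := by
              refine integral_mono_ae integrable_condExp
                ((hintexp n hn hnT'').mul_const K) ?_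
              filter_upwards [hpull, hcexp] with ω hp hc
              rw [hp]
              exact mul_le_mul_of_nonneg_left hc (Real.exp_pos _).le
          _ = K * ∫ ω, Real.exp (lam * Z n ω) ∂μ := by rw [integral_mul_const]; ring
          _ ≤ K * Real.exp (C * lam^2 * (((n : ℝ)*((n : ℝ)+1) - (ρ : ℝ)*((ρ : ℝ)+1))/(2*ρ))) :=
              mul_le_mul_of_nonneg_left (ih hnT'') (Real.exp_pos _).le
      refine step.trans (le_of_eq ?_)
      rw [hK, ← Real.exp_add, hc2]
      push_cast
      congr 1
      field_simp
      ring
  -- Markov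
  have hTbnd := key T hρT.le le_rfl
  have hintT := hintexp T hρT.le le_rfl
  have hmar := mul_meas_ge_le_integral_of_nonneg
    (ae_of_all μ fun ω => (Real.exp_pos (lam * Z T ω)).le) hintT (Real.exp (lam * a))
  have hsub : {ω | a ≤ Z T ω} ⊆ {ω | Real.exp (lam * a) ≤ Real.exp (lam * Z T ω)} :=
    fun ω hω => Real.exp_le_exp.2 (mul_le_mul_of_nonneg_left hω hlam.le)
  have h1 : μ {ω | a ≤ Z T ω} ≤ μ {ω | Real.exp (lam * a) ≤ Real.exp (lam * Z T ω)} :=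
    measure_mono hsub
  have hfin : μ {ω | Real.exp (lam * a) ≤ Real.exp (lam * Z T ω)} ≠ ⊤ := measure_ne_top μ _
  have h2 : (μ {ω | Real.exp (lam * a) ≤ Real.exp (lam * Z T ω)}).toReal ≤
      Real.exp (C * lam^2 * (((T : ℝ)*((T : ℝ)+1) - (ρ : ℝ)*((ρ : ℝ)+1))/(2*ρ)) - lam * a) := by
    rw [Real.exp_sub, le_div_iff₀ (Real.exp_pos _)]
    calc (μ {ω | Real.exp (lam * a) ≤ Real.exp (lam * Z T ω)}).toReal * Real.exp (lam * a)
        = Real.exp (lam * a) * (μ {x | Real.exp (lam * a) ≤ Real.exp (lam * Z T x)}).toReal := by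
          ring
      _ ≤ ∫ ω, Real.exp (lam * Z T ω) ∂μ := hmar
      _ ≤ _ := hTbnd
  calc μ {ω | a ≤ Z T ω} ≤ μ {ω | Real.exp (lam * a) ≤ Real.exp (lam * Z T ω)} := h1
    _ = ENNReal.ofReal ((μ {ω | Real.exp (lam * a) ≤ Real.exp (lam * Z T ω)}).toReal) :=
        (ENNReal.ofReal_toReal hfin).symm
    _ ≤ _ := ENNReal.ofReal_le_ofReal h2

/-- Reservoir sampling of an adaptive stream. -/
theorem reservoir_sampling_martingale_and_concentration
    {Ω : Type*} {m0 : MeasurableSpace Ω} (μ : Measure Ω) [IsProbabilityMeasure μ]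
    (ℱ : Filtration ℕ m0) (𝒢 𝒢' : ℕ → MeasurableSpace Ω)
    (ρ T : ℕ) (hρ : 0 < ρ) (hρT : ρ < T)
    (s ins rem cnt strm : ℕ → Ω → ℝ) (Z : ℕ → Ω → ℝ)
    (horder : ∀ t, 1 ≤ t → ℱ (t - 1) ≤ 𝒢 t ∧ 𝒢 t ≤ 𝒢' t ∧ 𝒢' t ≤ ℱ t)
    (hsval : ∀ t ω, s t ω = 0 ∨ s t ω = 1)
    (hinsval : ∀ t ω, ins t ω = 0 ∨ ins t ω = 1)
    (hremval : ∀ t ω, rem t ω = 0 ∨ rem t ω = 1)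
    (hremins : ∀ t ω, rem t ω ≤ ins t ω)
    (hsmeas : ∀ t, 1 ≤ t → Measurable[𝒢 t] (s t))
    (hinsmeas : ∀ t, 1 ≤ t → Measurable[𝒢' t] (ins t))
    (hremmeas : ∀ t, 1 ≤ t → Measurable[ℱ t] (rem t))
    (hcnt_init : ∀ t, t ≤ ρ → ∀ ω, cnt t ω = strm t ω)
    (hcnt_rec : ∀ t, ρ < t → ∀ ω, cnt t ω = cnt (t - 1) ω + ins t ω * s t ω - rem t ω)
    (hcnt_bnd : ∀ t ω, 0 ≤ cnt t ω ∧ cnt t ω ≤ ρ)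
    (hcnt_adapted : ∀ t, Measurable[ℱ t] (cnt t))
    (hstrm0 : ∀ ω, strm 0 ω = 0)
    (hstrm_rec : ∀ t, 1 ≤ t → ∀ ω, strm t ω = strm (t - 1) ω + s t ω)
    (hins_cond : ∀ t, ρ < t → μ[ins t | 𝒢 t] =ᵐ[μ] fun _ => (ρ : ℝ) / t)
    (hrem_cond : ∀ t, ρ < t →
      μ[rem t | 𝒢' t] =ᵐ[μ] fun ω => ins t ω * cnt (t - 1) ω / ρ)
    (hZ : ∀ t ω, Z t ω = if t ≤ ρ then 0 else (t / ρ : ℝ) * cnt t ω - strm t ω)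
    (δ ε : ℝ) (hδ : δ ∈ Set.Ioo (0:ℝ) 1) (hε : ε ∈ Set.Ioo (0:ℝ) 1) :
    Martingale Z ℱ μ ∧
      (∀ t, ρ < t → ∀ᵐ ω ∂μ, |Z t ω - Z (t - 1) ω| ≤ (t : ℝ) / ρ) ∧
      (∀ t, ρ < t →
        ∀ᵐ ω ∂μ, (μ[fun ω => (Z t ω - Z (t - 1) ω) ^ 2 | ℱ (t - 1)]) ω ≤ (t : ℝ) / ρ) ∧
      ((2 / ε ^ 2) * Real.log (2 / δ) ≤ (ρ : ℝ) →
        μ {ω | ε ≤ |strm T ω / T - cnt T ω / ρ|} ≤ ENNReal.ofReal δ) := by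
  have hρR : (0:ℝ) < ρ := by exact_mod_cast hρ
  -- alternative formula for Z
  have hZalt : ∀ t, ρ ≤ t → ∀ ω, Z t ω = (t:ℝ)/ρ * cnt t ω - strm t ω := by
    intro t ht ω
    rcases eq_or_lt_of_le ht with h|h
    · rw [hZ, if_pos (le_of_eq h.symm), hcnt_init t (le_of_eq h.symm) ω]
      have he : (t:ℝ)/ρ = 1 := by rw [← h]; field_simp
      rw [he]; ring
    · rw [hZ, if_neg (by omega)]
  -- increment formula
  have hXeq : ∀ t, ρ < t → ∀ ω, Z t ω - Z (t-1) ω =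
      ((t:ℝ)/ρ) * (ins t ω * s t ω - rem t ω) + (cnt (t-1) ω/ρ - s t ω) := by
    intro t ht ω
    have h1t : 1 ≤ t := by omega
    have e5 : ((t-1:ℕ):ℝ) = (t:ℝ) - 1 := by
      have : (1:ℕ) ≤ t := h1t
      push_cast [this]; ring
    rw [hZalt t ht.le ω, hZalt (t-1) (by omega) ω, hcnt_rec t ht ω,
      hstrm_rec t h1t ω, e5]
    field_simp
    ring
  -- strm measurability
  have hstrm_meas : ∀ n, Measurable[ℱ n] (strm n) := by
    intro n
    induction n with
    | zero =>
      have h0 : strm 0 = fun _ => 0 := funext hstrm0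
      rw [h0]; exact measurable_const
    | succ k ih =>
      have h0 : strm (k+1) = fun ω => strm k ω + s (k+1) ω := funext fun ω => by
        simpa using hstrm_rec (k+1) (by omega) ω
      rw [h0]
      have h1 : Measurable[ℱ (k+1)] (strm k) := ih.mono (ℱ.mono (Nat.le_succ k)) le_rfl
      obtain ⟨ha, hb, hc⟩ := horder (k+1) (by omega)
      have h2 : Measurable[ℱ (k+1)] (s (k+1)) :=
        (hsmeas (k+1) (by omega)).mono (hb.trans hc) le_rfl
      exact h1.add h2
  -- strm bounds
  have hstrm_bnd : ∀ n ω, 0 ≤ strm n ω ∧ strm n ω ≤ n := by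
    intro n
    induction n with
    | zero => intro ω; rw [hstrm0 ω]; norm_num
    | succ k ih =>
      intro ω
      have h0 : strm (k+1) ω = strm k ω + s (k+1) ω := by
        simpa using hstrm_rec (k+1) (by omega) ω
      obtain ⟨ih0, ih1⟩ := ih ω
      rcases hsval (k+1) ω with h|h <;> rw [h0, h] <;> push_cast <;> constructor <;> linarith
  -- Z adapted
  have hZadp : ∀ n, StronglyMeasurable[ℱ n] (Z n) := by
    intro n
    by_cases h : n ≤ ρ
    · have h0 : Z n = fun _ => 0 := funext fun ω => by rw [hZ, if_pos h]
      rw [h0]; exact stronglyMeasurable_const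
    · have h0 : Z n = fun ω => (n:ℝ)/ρ * cnt n ω - strm n ω :=
        funext fun ω => by rw [hZ, if_neg h]
      rw [h0]
      exact ((measurable_const.mul (hcnt_adapted n)).sub (hstrm_meas n)).stronglyMeasurable
  -- Z integrable
  have hZint : ∀ n, Integrable (Z n) μ := by
    intro n
    refine integrable_of_abs_le' (C := (n:ℝ)/ρ * ρ + n)
      ((hZadp n).mono (ℱ.le n)).aestronglyMeasurable fun ω => ?_
    by_cases h : n ≤ ρ
    · rw [hZ, if_pos h]
      simp only [abs_zero]
      positivity
    · rw [hZ, if_neg h]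
      obtain ⟨hc0, hc1⟩ := hcnt_bnd n ω
      obtain ⟨hs0, hs1⟩ := hstrm_bnd n ω
      have hn0 : (0:ℝ) ≤ (n:ℝ)/ρ := by positivity
      rw [abs_le]
      constructor <;> nlinarith
  -- increment bound
  have hXabs : ∀ t, ρ < t → ∀ ω, |Z t ω - Z (t-1) ω| ≤ (t:ℝ)/ρ := by
    intro t ht ω
    rw [hXeq t ht ω]
    obtain ⟨hc0, hc1⟩ := hcnt_bnd (t-1) ω
    have hm0 : (0:ℝ) ≤ cnt (t-1) ω / ρ := by positivity
    have hm1 : cnt (t-1) ω / ρ ≤ 1 := by rw [div_le_one hρR]; exact hc1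
    have hb1 : (1:ℝ) ≤ (t:ℝ)/ρ := by
      rw [le_div_iff₀ hρR, one_mul]; exact_mod_cast ht.le
    have hri := hremins t ω
    rcases hsval t ω with h1|h1 <;> rcases hinsval t ω with h2|h2 <;>
      rcases hremval t ω with h3|h3 <;>
      simp only [h1, h2, h3, one_mul, mul_one, zero_mul, mul_zero, zero_div, sub_zero, add_zero, zero_add] at hri ⊢ <;> rw [abs_le] <;> constructor <;> nlinarith
  -- one-step conditional computations
  have hcond : ∀ n, ρ ≤ n →
      (μ[fun ω => Z (n+1) ω - Z n ω|ℱ n] =ᵐ[μ] 0) ∧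
      (μ[fun ω => (Z (n+1) ω - Z n ω)^2|ℱ n] ≤ᵐ[μ] fun _ => ((n:ℝ)+1)/ρ) := by
    intro n hn
    have h1n : 1 ≤ n + 1 := by omega
    have hρn : ρ < n + 1 := by omega
    obtain ⟨ho1, ho2, ho3⟩ := horder (n+1) h1n
    have ho1' : (ℱ n : MeasurableSpace Ω) ≤ 𝒢 (n+1) := by simpa using ho1
    have hgm0 : 𝒢 (n+1) ≤ m0 := ho2.trans (ho3.trans (ℱ.le (n+1)))
    have hg'm0 : 𝒢' (n+1) ≤ m0 := ho3.trans (ℱ.le (n+1))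
    set b : ℝ := ((n:ℝ)+1)/ρ with hb
    have hb0 : 0 < b := by positivity
    -- sub-σ-algebra measurability
    have hsM : Measurable[𝒢 (n+1)] (s (n+1)) := hsmeas (n+1) h1n
    have hsg' : Measurable[𝒢' (n+1)] (s (n+1)) := hsM.mono ho2 le_rfl
    have hinsM : Measurable[𝒢' (n+1)] (ins (n+1)) := hinsmeas (n+1) h1n
    have hcg : Measurable[𝒢 (n+1)] (cnt n) := (hcnt_adapted n).mono ho1' le_rfl
    have hcg' : Measurable[𝒢' (n+1)] (cnt n) := hcg.mono ho2 le_rfl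
    -- ambient measurability
    have hsM0 : Measurable[m0] (s (n+1)) := hsM.mono hgm0 le_rfl
    have hinsM0 : Measurable[m0] (ins (n+1)) := hinsM.mono hg'm0 le_rfl
    have hremM0 : Measurable[m0] (rem (n+1)) := (hremmeas (n+1) h1n).mono (ℱ.le (n+1)) le_rfl
    have hcM0 : Measurable[m0] (cnt n) := (hcnt_adapted n).mono (ℱ.le n) le_rfl
    -- value bounds
    have hm01 : ∀ ω, 0 ≤ cnt n ω / ρ ∧ cnt n ω / ρ ≤ 1 := fun ω => by
      obtain ⟨h0, h1⟩ := hcnt_bnd n ω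
      exact ⟨by positivity, by rw [div_le_one hρR]; exact h1⟩
    have hfin : (ρ:ℝ) ≠ 0 := ne_of_gt hρR
    have hfin2 : ((n:ℝ)+1) ≠ 0 := by positivity
    -- the main functions
    set A : Ω → ℝ := fun ω => b * (ins (n+1) ω * s (n+1) ω) + (cnt n ω/ρ - s (n+1) ω) with hA
    set E1 : Ω → ℝ := fun ω => A ω - b * (ins (n+1) ω * cnt n ω / ρ) with hE1
    -- integrability of basic pieces
    have hremint : Integrable (rem (n+1)) μ :=
      integrable_of_abs_le' hremM0.aestronglyMeasurable (C := 1) fun ω => by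
        rcases hremval (n+1) ω with h|h <;> rw [h] <;> norm_num
    have hinsint : Integrable (ins (n+1)) μ :=
      integrable_of_abs_le' hinsM0.aestronglyMeasurable (C := 1) fun ω => by
        rcases hinsval (n+1) ω with h|h <;> rw [h] <;> norm_num
    have hAM0 : Measurable[m0] A :=
      (measurable_const.mul (hinsM0.mul hsM0)).add ((hcM0.div_const _).sub hsM0)
    have intA : Integrable A μ := by
      refine integrable_of_abs_le' hAM0.aestronglyMeasurable (C := b + 1) fun ω => ?_
      obtain ⟨hy0, hy1⟩ := hm01 ω
      simp only [hA]
      rcases hsval (n+1) ω with h1|h1 <;> rcases hinsval (n+1) ω with h2|h2 <;>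
        simp only [h1, h2, one_mul, mul_one, zero_mul, mul_zero, zero_div, sub_zero, add_zero, zero_add] <;> rw [abs_le] <;> constructor <;> nlinarith
    have intbrem : Integrable ((fun _ => b) * rem (n+1)) μ := by
      have : ((fun _ => b) * rem (n+1)) = fun ω => b * rem (n+1) ω := rfl
      rw [this]; exact hremint.const_mul b
    have intE1 : Integrable E1 μ := by
      refine integrable_of_abs_le' ?_ (C := 2*b + 1) fun ω => ?_
      · exact (hAM0.sub (measurable_const.mul
          ((hinsM0.mul hcM0).div_const _))).aestronglyMeasurable
      · obtain ⟨hy0, hy1⟩ := hm01 ω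
        simp only [hE1, hA]
        rcases hsval (n+1) ω with h1|h1 <;> rcases hinsval (n+1) ω with h2|h2 <;>
          simp only [h1, h2, one_mul, mul_one, zero_mul, mul_zero, zero_div, sub_zero, add_zero, zero_add] <;> rw [abs_le] <;> constructor <;> nlinarith
          [mul_div_assoc (ins (n+1) ω) (cnt n ω) ((ρ:ℝ))]
    -- Step A for the martingale property : condition on 𝒢'
    have hDfun : (fun ω => Z (n+1) ω - Z n ω) = A - (fun _ => b) * rem (n+1) := by
      funext ω
      have h0 := hXeq (n+1) (by omega) ω
      simp only [Nat.add_sub_cancel] at h0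
      simp only [Pi.sub_apply, Pi.mul_apply, hA]
      rw [h0, hb]
      push_cast
      ring
    have hstepA : μ[fun ω => Z (n+1) ω - Z n ω|𝒢' (n+1)] =ᵐ[μ] E1 := by
      rw [hDfun]
      have e1 := condExp_sub (μ := μ) (m := 𝒢' (n+1)) intA intbrem
      have e2 : μ[A|𝒢' (n+1)] = A :=
        condExp_of_stronglyMeasurable hg'm0
          (((measurable_const.mul (hinsM.mul hsg')).add
            ((hcg'.div_const _).sub hsg')).stronglyMeasurable) intA
      have e3 := condExp_mul_of_stronglyMeasurable_left (μ := μ) (m := 𝒢' (n+1))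
        (stronglyMeasurable_const (b := b)) intbrem hremint
      have e4 := hrem_cond (n+1) hρn
      simp only [Nat.add_sub_cancel] at e4
      filter_upwards [e1, e3, e4] with ω w1 w3 w4
      have g2 : (μ[A|𝒢' (n+1)]) ω = A ω := by rw [e2]
      simp only [Pi.sub_apply, Pi.mul_apply] at w1 w3
      rw [w1, g2, w3, w4]
      try simp only [hE1]
      try ring
    -- Step B for the martingale property : condition on 𝒢
    set w : Ω → ℝ := fun ω => b * s (n+1) ω - b * (cnt n ω/ρ) with hw
    have hwM0 : Measurable[m0] w :=
      (measurable_const.mul hsM0).sub (measurable_const.mul (hcM0.div_const _))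
    have intwins : Integrable (w * ins (n+1)) μ := by
      refine integrable_of_abs_le' (hwM0.mul hinsM0).aestronglyMeasurable (C := 2*b)
        fun ω => ?_
      obtain ⟨hy0, hy1⟩ := hm01 ω
      simp only [Pi.mul_apply, hw]
      rcases hsval (n+1) ω with h1|h1 <;> rcases hinsval (n+1) ω with h2|h2 <;>
        simp only [h1, h2, one_mul, mul_one, zero_mul, mul_zero, zero_div, sub_zero, add_zero, zero_add] <;> rw [abs_le] <;> constructor <;> nlinarith
    have inth : Integrable (fun ω => cnt n ω/ρ - s (n+1) ω) μ := by
      refine integrable_of_abs_le' ((hcM0.div_const _).sub hsM0).aestronglyMeasurable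
        (C := 1) fun ω => ?_
      obtain ⟨hy0, hy1⟩ := hm01 ω
      rcases hsval (n+1) ω with h1|h1 <;> rw [h1, abs_le] <;> constructor <;> nlinarith
    have hE1split : E1 = w * ins (n+1) + fun ω => cnt n ω/ρ - s (n+1) ω := by
      funext ω
      simp only [Pi.add_apply, Pi.mul_apply, hE1, hA, hw]
      ring
    have e3h : μ[fun ω => cnt n ω/ρ - s (n+1) ω|𝒢 (n+1)] = fun ω => cnt n ω/ρ - s (n+1) ω :=
      condExp_of_stronglyMeasurable hgm0 (((hcg.div_const _).sub hsM).stronglyMeasurable) inth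
    have hstepB : μ[E1|𝒢 (n+1)] =ᵐ[μ] (0 : Ω → ℝ) := by
      rw [hE1split]
      have e1 := condExp_add (μ := μ) (m := 𝒢 (n+1)) intwins inth
      have e2 : μ[w * ins (n+1)|𝒢 (n+1)] =ᵐ[μ] w * μ[ins (n+1)|𝒢 (n+1)] :=
        condExp_mul_of_stronglyMeasurable_left (μ := μ) (m := 𝒢 (n+1))
        (((measurable_const.mul hsM).sub
          (measurable_const.mul (hcg.div_const _))).stronglyMeasurable)
        intwins hinsint
      have e4 := hins_cond (n+1) hρn
      filter_upwards [e1, e2, e4] with ω w1 w2 w4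
      simp only [Pi.add_apply, Pi.mul_apply] at w1 w2
      have g3 : (μ[fun ω => cnt n ω/ρ - s (n+1) ω|𝒢 (n+1)]) ω
          = cnt n ω/ρ - s (n+1) ω := by rw [e3h]
      rw [Pi.zero_apply, w1, w2, g3, w4]
      try simp only [hw, hb]
      push_cast
      field_simp
      ring
    have hDint : Integrable (fun ω => Z (n+1) ω - Z n ω) μ := (hZint (n+1)).sub (hZint n)
    have hmart1 : μ[fun ω => Z (n+1) ω - Z n ω|ℱ n] =ᵐ[μ] 0 := by
      calc μ[fun ω => Z (n+1) ω - Z n ω|ℱ n]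
          =ᵐ[μ] μ[μ[fun ω => Z (n+1) ω - Z n ω|𝒢' (n+1)]|ℱ n] :=
            (condExp_condExp_of_le (ho1'.trans ho2) hg'm0).symm
        _ =ᵐ[μ] μ[E1|ℱ n] := condExp_congr_ae hstepA
        _ =ᵐ[μ] μ[μ[E1|𝒢 (n+1)]|ℱ n] := (condExp_condExp_of_le ho1' hgm0).symm
        _ =ᵐ[μ] μ[(0:Ω → ℝ)|ℱ n] := condExp_congr_ae hstepB
        _ =ᵐ[μ] 0 := by rw [condExp_zero]
    refine ⟨hmart1, ?_⟩
    -- conditional variance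
    set P : Ω → ℝ := fun ω => b^2 * (ins (n+1) ω * s (n+1) ω)
      + 2*(cnt n ω/ρ - s (n+1) ω)*b*(ins (n+1) ω * s (n+1) ω)
      + (cnt n ω/ρ - s (n+1) ω)^2 with hP
    set q : Ω → ℝ := fun ω => b^2 - 2*b^2*s (n+1) ω - 2*(cnt n ω/ρ - s (n+1) ω)*b with hq
    set v : Ω → ℝ := fun ω => b^2*s (n+1) ω + 2*(cnt n ω/ρ - s (n+1) ω)*b*s (n+1) ω
      + q ω * (cnt n ω/ρ) with hv
    set W : Ω → ℝ := fun ω => v ω * ((ρ:ℝ)/((n:ℝ)+1)) + (cnt n ω/ρ - s (n+1) ω)^2 with hW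
    have hPM0 : Measurable[m0] P :=
      ((measurable_const.mul (hinsM0.mul hsM0)).add
        ((((measurable_const.mul ((hcM0.div_const _).sub hsM0)).mul measurable_const).mul
          (hinsM0.mul hsM0)))).add (((hcM0.div_const _).sub hsM0).pow measurable_const)
    have hqM0 : Measurable[m0] q :=
      ((measurable_const.sub (measurable_const.mul hsM0))).sub
        ((measurable_const.mul ((hcM0.div_const _).sub hsM0)).mul measurable_const)
    have hqg : Measurable[𝒢 (n+1)] q :=
      ((measurable_const.sub (measurable_const.mul hsM))).sub
        ((measurable_const.mul ((hcg.div_const _).sub hsM)).mul measurable_const)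
    have hvM0 : Measurable[m0] v :=
      ((measurable_const.mul hsM0).add
        (((measurable_const.mul ((hcM0.div_const _).sub hsM0)).mul measurable_const).mul hsM0)).add
        (hqM0.mul (hcM0.div_const _))
    have hvg : Measurable[𝒢 (n+1)] v :=
      ((measurable_const.mul hsM).add
        (((measurable_const.mul ((hcg.div_const _).sub hsM)).mul measurable_const).mul hsM)).add
        (hqg.mul (hcg.div_const _))
    -- bounds on the pieces
    have hqbnd : ∀ ω, |q ω| ≤ 3*b^2 + 2*b := by
      intro ω
      obtain ⟨hy0, hy1⟩ := hm01 ω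
      simp only [hq]
      rcases hsval (n+1) ω with h1|h1 <;> simp only [h1, one_mul, mul_one, zero_mul, mul_zero, zero_div, sub_zero, add_zero, zero_add] <;> rw [abs_le] <;>
        constructor <;> nlinarith [sq_nonneg b]
    have hPbnd : ∀ ω, |P ω| ≤ b^2 + 2*b + 1 := by
      intro ω
      obtain ⟨hy0, hy1⟩ := hm01 ω
      simp only [hP]
      rcases hsval (n+1) ω with h1|h1 <;> rcases hinsval (n+1) ω with h2|h2 <;>
        simp only [h1, h2, one_mul, mul_one, zero_mul, mul_zero, zero_div, sub_zero, add_zero, zero_add] <;> rw [abs_le] <;> constructor <;>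
        nlinarith [sq_nonneg b, sq_nonneg (cnt n ω/ρ), sq_nonneg (cnt n ω/ρ - 1)]
    have intP : Integrable P μ :=
      integrable_of_abs_le' hPM0.aestronglyMeasurable hPbnd
    have intqrem : Integrable (q * rem (n+1)) μ := by
      refine integrable_of_abs_le' (hqM0.mul hremM0).aestronglyMeasurable
        (C := 3*b^2 + 2*b) fun ω => ?_
      have := hqbnd ω
      rcases hremval (n+1) ω with h|h <;>
        simp only [Pi.mul_apply, h, mul_one, mul_zero, abs_zero] <;>
        [positivity; exact this]
    have intvins : Integrable (v * ins (n+1)) μ := by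
      refine integrable_of_abs_le' (hvM0.mul hinsM0).aestronglyMeasurable
        (C := 6*b^2 + 4*b) fun ω => ?_
      obtain ⟨hy0, hy1⟩ := hm01 ω
      have hqb := hqbnd ω
      have hvb : |v ω| ≤ 6*b^2 + 4*b := by
        simp only [hv]
        rcases hsval (n+1) ω with h1|h1 <;> simp only [h1, one_mul, mul_one, zero_mul, mul_zero, zero_div, sub_zero, add_zero, zero_add] <;> rw [abs_le] <;>
          constructor <;> rcases abs_le.mp hqb with ⟨hqa, hqc⟩ <;>
          nlinarith [sq_nonneg b, mul_le_mul_of_nonneg_right hqc hy0,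
            mul_le_mul_of_nonneg_right hqa hy0]
      rcases hinsval (n+1) ω with h|h <;>
        simp only [Pi.mul_apply, h, mul_one, mul_zero, abs_zero] <;>
        [positivity; exact hvb]
    have intE2 : Integrable (P + q * (fun ω => ins (n+1) ω * cnt n ω / ρ)) μ := by
      have hfe : (P + q * (fun ω => ins (n+1) ω * cnt n ω / ρ))
          = fun ω => P ω + q ω * (ins (n+1) ω * cnt n ω / ρ) := rfl
      refine integrable_of_abs_le' ?_ (C := (b^2+2*b+1) + (3*b^2+2*b)) fun ω => ?_
      · exact (hPM0.add (hqM0.mul ((hinsM0.mul hcM0).div_const _))).aestronglyMeasurable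
      · obtain ⟨hy0, hy1⟩ := hm01 ω
        have h1 := hPbnd ω
        have h2 := hqbnd ω
        have h3 : |ins (n+1) ω * cnt n ω / ρ| ≤ 1 := by
          rw [mul_div_assoc]
          rcases hinsval (n+1) ω with h|h <;> rw [h] <;>
            simp only [one_mul, zero_mul, abs_zero] <;> [norm_num; skip]
          rw [abs_le]; constructor <;> nlinarith
        simp only [Pi.add_apply, Pi.mul_apply]
        calc |P ω + q ω * (ins (n+1) ω * cnt n ω / ρ)|
            ≤ |P ω| + |q ω| * |ins (n+1) ω * cnt n ω / ρ| := by
              rw [← abs_mul]; exact abs_add_le _ _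
          _ ≤ (b^2+2*b+1) + (3*b^2+2*b) := by
              have h4 : |q ω| * |ins (n+1) ω * cnt n ω / ρ| ≤ (3*b^2+2*b) * 1 :=
                mul_le_mul h2 h3 (abs_nonneg _) (by positivity)
              rw [mul_one] at h4; linarith
    -- squared increment decomposition
    have hQfun : (fun ω => (Z (n+1) ω - Z n ω)^2) = P + q * rem (n+1) := by
      funext ω
      have h0 := hXeq (n+1) (by omega) ω
      simp only [Nat.add_sub_cancel] at h0
      have hcast : ((n+1:ℕ):ℝ)/(ρ:ℝ) = b := by rw [hb]; push_cast; ring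
      rw [Pi.add_apply, Pi.mul_apply, h0, hcast, hP, hq]
      have hri := hremins (n+1) ω
      rcases hsval (n+1) ω with h1|h1 <;> rcases hinsval (n+1) ω with h2|h2 <;>
        rcases hremval (n+1) ω with h3|h3 <;> simp only [h1, h2, h3, one_mul, mul_one, zero_mul, mul_zero, zero_div, sub_zero, add_zero, zero_add] at hri ⊢ <;>
        first
          | ring1
          | (exact absurd hri (by norm_num))
    have hstepA2 : μ[fun ω => (Z (n+1) ω - Z n ω)^2|𝒢' (n+1)] =ᵐ[μ]
        P + q * (fun ω => ins (n+1) ω * cnt n ω / ρ) := by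
      rw [hQfun]
      have e1 := condExp_add (μ := μ) (m := 𝒢' (n+1)) intP intqrem
      have e2 : μ[P|𝒢' (n+1)] = P :=
        condExp_of_stronglyMeasurable hg'm0
          (((measurable_const.mul (hinsM.mul hsg')).add
            ((((measurable_const.mul ((hcg'.div_const _).sub hsg')).mul measurable_const).mul
              (hinsM.mul hsg')))).add
            (((hcg'.div_const _).sub hsg').pow measurable_const)).stronglyMeasurable intP
      have e3 := condExp_mul_of_stronglyMeasurable_left (μ := μ) (m := 𝒢' (n+1))
        (hqg.mono ho2 le_rfl).stronglyMeasurable intqrem hremint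
      have e4 := hrem_cond (n+1) hρn
      simp only [Nat.add_sub_cancel] at e4
      filter_upwards [e1, e3, e4] with ω w1 w3 w4
      have g2 : (μ[P|𝒢' (n+1)]) ω = P ω := by rw [e2]
      simp only [Pi.add_apply, Pi.mul_apply] at w1 w3 ⊢
      rw [w1, g2, w3, w4]
    have hE2split : P + q * (fun ω => ins (n+1) ω * cnt n ω / ρ)
        = v * ins (n+1) + fun ω => (cnt n ω/ρ - s (n+1) ω)^2 := by
      funext ω
      simp only [Pi.add_apply, Pi.mul_apply, hP, hq, hv]
      ring
    have intsq : Integrable (fun ω => (cnt n ω/ρ - s (n+1) ω)^2) μ := by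
      refine integrable_of_abs_le' (((hcM0.div_const _).sub hsM0).pow
        measurable_const).aestronglyMeasurable (C := 1) fun ω => ?_
      obtain ⟨hy0, hy1⟩ := hm01 ω
      rcases hsval (n+1) ω with h1|h1 <;> rw [h1, abs_le] <;> constructor <;> nlinarith
    have e3i : μ[fun ω => (cnt n ω/ρ - s (n+1) ω)^2|𝒢 (n+1)]
        = fun ω => (cnt n ω/ρ - s (n+1) ω)^2 :=
      condExp_of_stronglyMeasurable hgm0
        (((hcg.div_const _).sub hsM).pow measurable_const).stronglyMeasurable intsq
    have hstepB2 : μ[P + q * (fun ω => ins (n+1) ω * cnt n ω / ρ)|𝒢 (n+1)] =ᵐ[μ] W := by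
      rw [hE2split]
      have e1 := condExp_add (μ := μ) (m := 𝒢 (n+1)) intvins intsq
      have e2 := condExp_mul_of_stronglyMeasurable_left (μ := μ) (m := 𝒢 (n+1))
        hvg.stronglyMeasurable intvins hinsint
      have e4 := hins_cond (n+1) hρn
      filter_upwards [e1, e2, e4] with ω w1 w2 w4
      simp only [Pi.add_apply, Pi.mul_apply] at w1 w2
      have g3 : (μ[fun ω => (cnt n ω/ρ - s (n+1) ω)^2|𝒢 (n+1)]) ω
          = (cnt n ω/ρ - s (n+1) ω)^2 := by rw [e3i]
      rw [w1, w2, g3, w4, hW]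
      push_cast
      ring
    have hWle : ∀ ω, W ω ≤ ((n:ℝ)+1)/ρ := by
      intro ω
      obtain ⟨hy0, hy1⟩ := hm01 ω
      have hbr2 : b * ((ρ:ℝ)/((n:ℝ)+1)) = 1 := by rw [hb]; field_simp
      have := W_bound (b := b) (r2 := (ρ:ℝ)/((n:ℝ)+1)) (m := cnt n ω/ρ)
        (sv := s (n+1) ω) hb0 hbr2 hy0 hy1 (hsval (n+1) ω)
      calc W ω ≤ b := by
            rw [hW, hv, hq]
            convert this using 2
            try ring
        _ = ((n:ℝ)+1)/ρ := hb
    have intW : Integrable W μ := integrable_condExp.congr hstepB2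
    have hvar1 : μ[fun ω => (Z (n+1) ω - Z n ω)^2|ℱ n] ≤ᵐ[μ] fun _ => ((n:ℝ)+1)/ρ := by
      have c1 : μ[fun ω => (Z (n+1) ω - Z n ω)^2|ℱ n] =ᵐ[μ] μ[W|ℱ n] := by
        calc μ[fun ω => (Z (n+1) ω - Z n ω)^2|ℱ n]
            =ᵐ[μ] μ[μ[fun ω => (Z (n+1) ω - Z n ω)^2|𝒢' (n+1)]|ℱ n] :=
              (condExp_condExp_of_le (ho1'.trans ho2) hg'm0).symm
          _ =ᵐ[μ] μ[P + q * (fun ω => ins (n+1) ω * cnt n ω / ρ)|ℱ n] :=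
              condExp_congr_ae hstepA2
          _ =ᵐ[μ] μ[μ[P + q * (fun ω => ins (n+1) ω * cnt n ω / ρ)|𝒢 (n+1)]|ℱ n] :=
              (condExp_condExp_of_le ho1' hgm0).symm
          _ =ᵐ[μ] μ[W|ℱ n] := condExp_congr_ae hstepB2
      have c2 : μ[W|ℱ n] ≤ᵐ[μ] μ[fun _ => ((n:ℝ)+1)/ρ|ℱ n] :=
        condExp_mono intW (integrable_const _) (ae_of_all _ hWle)
      have c3 : μ[fun _ => ((n:ℝ)+1)/ρ|ℱ n] = fun _ => ((n:ℝ)+1)/ρ :=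
        condExp_const (ℱ.le n) _
      filter_upwards [c1, c2] with ω u1 u2
      rw [u1]
      exact u2.trans (le_of_eq (by rw [c3]))
    exact hvar1
  -- Part 1 : martingale
  have hmartZ : Martingale Z ℱ μ := by
    refine martingale_nat (fun n => hZadp n) hZint fun n => ?_
    by_cases h : n + 1 ≤ ρ
    · have hz1 : Z (n+1) = fun _ => (0:ℝ) := funext fun ω => by rw [hZ, if_pos h]
      have hz0 : Z n = fun _ => (0:ℝ) := funext fun ω => by rw [hZ, if_pos (by omega)]
      rw [hz0, hz1, condExp_const (ℱ.le n)]
    · have hn : ρ ≤ n := by omega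
      have hd := (hcond n hn).1
      have hd' : μ[Z (n+1) - Z n|ℱ n] =ᵐ[μ] 0 := by
        have he0 : (Z (n+1) - Z n) = fun ω => Z (n+1) ω - Z n ω := rfl
        rw [he0]; exact hd
      have hZn : μ[Z n|ℱ n] = Z n :=
        condExp_of_stronglyMeasurable (ℱ.le n) (hZadp n) (hZint n)
      have he : Z (n+1) = Z (n+1) - Z n + Z n := by
        funext ω; simp
      refine EventuallyEq.symm ?_
      have hadd := condExp_add (μ := μ) (m := ℱ n)
        ((hZint (n+1)).sub (hZint n)) (hZint n)
      rw [← he] at hadd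
      filter_upwards [hadd, hd'] with ω w1 w2
      rw [w1]
      simp only [Pi.add_apply, hZn, w2, Pi.zero_apply, zero_add]
  refine ⟨hmartZ, fun t ht => ae_of_all _ (hXabs t ht), ?_, ?_⟩
  -- Part 3 : conditional variance
  · intro t ht
    obtain ⟨n, rfl⟩ : ∃ n, t = n + 1 := ⟨t - 1, by omega⟩
    have h := (hcond n (by omega)).2
    simp only [Nat.add_sub_cancel]
    filter_upwards [h] with ω w
    exact w.trans (le_of_eq (by push_cast; ring))
  -- Part 4 : concentration
  · intro hbig
    obtain ⟨hδ0, hδ1⟩ := hδ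
    obtain ⟨hε0, hε1⟩ := hε
    have hTR : (0:ℝ) < T := by exact_mod_cast hρ.trans hρT
    have hρne : (ρ:ℝ) ≠ 0 := ne_of_gt hρR
    have hTne : (T:ℝ) ≠ 0 := ne_of_gt hTR
    have hL0 : 0 < Real.log (2/δ) := Real.log_pos (by rw [lt_div_iff₀ hδ0]; linarith)
    have hlog2 : (0.6931471803 : ℝ) < Real.log 2 := Real.log_two_gt_d9
    have hLlog2 : Real.log 2 ≤ Real.log (2/δ) := by
      apply Real.log_le_log (by norm_num)
      rw [le_div_iff₀ hδ0]; nlinarith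
    have hρ1R : (1:ℝ) < ρ := by
      have h2e : (2:ℝ) ≤ 2/ε^2 := by
        rw [le_div_iff₀ (by positivity)]; nlinarith
      nlinarith [hbig, hL0]
    have hT3 : (3:ℕ) ≤ T := by
      have h2 : (1:ℕ) < ρ := by exact_mod_cast hρ1R
      omega
    have hT3R : (3:ℝ) ≤ T := by exact_mod_cast hT3
    set lam : ℝ := 9*ε*ρ/(10*T) with hlam
    set u : ℝ := 9*ε/10 with hu
    have hlam0 : 0 < lam := by rw [hlam]; positivity
    have hueq : lam * T / ρ = u := by rw [hlam, hu]; field_simp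
    have hu1 : u ≤ 1 := by rw [hu]; linarith
    have hbnd' : ∀ n, ρ ≤ n → n < T → ∀ ω, |Z (n+1) ω - Z n ω| ≤ ((n:ℝ)+1)/ρ := by
      intro n hn _ ω
      have h0 := hXabs (n+1) (by omega) ω
      simp only [Nat.add_sub_cancel] at h0
      exact h0.trans (le_of_eq (by push_cast; ring))
    have hmart' : ∀ n, ρ ≤ n → n < T → μ[fun ω => Z (n+1) ω - Z n ω|ℱ n] =ᵐ[μ] 0 :=
      fun n hn _ => (hcond n hn).1
    have hvar' : ∀ n, ρ ≤ n → n < T →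
        μ[fun ω => (Z (n+1) ω - Z n ω)^2|ℱ n] ≤ᵐ[μ] fun _ => ((n:ℝ)+1)/ρ :=
      fun n hn _ => (hcond n hn).2
    have hZρ0 : ∀ ω, Z ρ ω = 0 := fun ω => by rw [hZ, if_pos le_rfl]
    have hbound1 := freedman_aux μ ℱ Z ρ T hρ hρT lam u hlam0 (le_of_eq hueq) hu1
      hZadp hZρ0 hbnd' hmart' hvar' (ε*T) (by positivity)
    have hbound2 := freedman_aux μ ℱ (fun n ω => -Z n ω) ρ T hρ hρT lam u hlam0
      (le_of_eq hueq) hu1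
      (fun n => (hZadp n).neg) (fun ω => by show -Z ρ ω = 0; rw [hZρ0 ω]; ring)
      (fun n hn hnT ω => by
        show |-Z (n+1) ω - -Z n ω| ≤ ((n:ℝ)+1)/ρ
        have h0 := hbnd' n hn hnT ω
        calc |(-Z (n+1) ω) - (-Z n ω)| = |Z (n+1) ω - Z n ω| := by
              rw [← abs_neg]; congr 1; ring
          _ ≤ _ := h0)
      (fun n hn hnT => by
        show μ[fun ω => -Z (n+1) ω - -Z n ω|ℱ n] =ᵐ[μ] 0
        have he : (fun ω => -Z (n+1) ω - -Z n ω) = -(fun ω => Z (n+1) ω - Z n ω) := by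
          funext ω; simp only [Pi.neg_apply]; ring
        rw [he]
        have hneg := condExp_neg (μ := μ) (m := ℱ n) (fun ω => Z (n+1) ω - Z n ω)
        filter_upwards [hneg, hmart' n hn hnT] with ω w1 w2
        simp only [w1, Pi.neg_apply, w2, Pi.zero_apply, neg_zero])
      (fun n hn hnT => by
        show μ[fun ω => (-Z (n+1) ω - -Z n ω)^2|ℱ n] ≤ᵐ[μ] fun _ => ((n:ℝ)+1)/ρ
        have he : (fun ω => (-Z (n+1) ω - -Z n ω)^2) = fun ω => (Z (n+1) ω - Z n ω)^2 := by
          funext ω; ring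
        rw [he]; exact hvar' n hn hnT)
      (ε*T) (by positivity)
    -- numeric estimate
    set Earg : ℝ := (1/2 + 2*u/9) * lam^2
        * (((T : ℝ)*((T : ℝ)+1) - (ρ : ℝ)*((ρ : ℝ)+1))/(2*ρ)) - lam * (ε*T) with hE
    have hexp : Real.exp Earg ≤ δ/2 := by
      have hQ0 : 0 ≤ ((T:ℝ)*((T:ℝ)+1) - (ρ:ℝ)*((ρ:ℝ)+1)) := by
        have hρTR : (ρ:ℝ) < T := by exact_mod_cast hρT
        nlinarith [hρR.le]
      have hQle : ((T:ℝ)*((T:ℝ)+1) - (ρ:ℝ)*((ρ:ℝ)+1)) ≤ (4/3)*(T:ℝ)^2 := by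
        nlinarith [hρR.le, hT3R, mul_nonneg hρR.le hρR.le]
      have hS0 : 0 ≤ ((T:ℝ)*((T:ℝ)+1) - (ρ:ℝ)*((ρ:ℝ)+1))/(T:ℝ)^2 := by positivity
      have hS43 : ((T:ℝ)*((T:ℝ)+1) - (ρ:ℝ)*((ρ:ℝ)+1))/(T:ℝ)^2 ≤ 4/3 := by
        rw [div_le_iff₀ (by positivity)]
        nlinarith [hQle]
      have hSdef : Earg = (1/2 + ε/5)
          * ((81/200)*(ε^2*ρ)*(((T:ℝ)*((T:ℝ)+1) - (ρ:ℝ)*((ρ:ℝ)+1))/(T:ℝ)^2))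
          - (9/10)*(ε^2*ρ) := by
        rw [hE, hu, hlam]
        field_simp
        ring
      have h2L : 2*Real.log (2/δ) ≤ ε^2*ρ := by
        have hmul := mul_le_mul_of_nonneg_left hbig (le_of_lt (by positivity : (0:ℝ) < ε^2))
        calc 2*Real.log (2/δ) = ε^2*(2/ε^2*Real.log (2/δ)) := by field_simp
          _ ≤ ε^2*ρ := hmul
      have hcS : (1/2 + ε/5)*(((T:ℝ)*((T:ℝ)+1) - (ρ:ℝ)*((ρ:ℝ)+1))/(T:ℝ)^2)
          ≤ (7/10)*(4/3) := by
        apply mul_le_mul (by linarith) hS43 hS0 (by norm_num)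
      have key : Earg ≤ -Real.log (2/δ) := by
        rw [hSdef]
        have hE2 : (0:ℝ) ≤ ε^2*ρ := by positivity
        nlinarith [mul_le_mul_of_nonneg_left hcS
          (by positivity : (0:ℝ) ≤ (81/200)*(ε^2*ρ)), h2L, hE2]
      calc Real.exp Earg ≤ Real.exp (-Real.log (2/δ)) := Real.exp_le_exp.2 key
        _ = δ/2 := by rw [Real.exp_neg, Real.exp_log (by positivity), inv_div]
    -- event inclusion and union bound
    have hsub : {ω | ε ≤ |strm T ω / T - cnt T ω / ρ|} ⊆
        {ω | ε*T ≤ Z T ω} ∪ {ω | ε*T ≤ -Z T ω} := by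
      intro ω hω
      simp only [Set.mem_setOf_eq] at hω
      have he : strm T ω / T - cnt T ω / ρ = -(Z T ω)/T := by
        rw [hZalt T hρT.le ω]; field_simp; ring
      have h8 : |strm T ω / T - cnt T ω / ρ| = |Z T ω|/T := by
        rw [he, abs_div, abs_neg, abs_of_pos hTR]
      rw [h8, le_div_iff₀ hTR] at hω
      rcases le_abs.mp hω with h|h
      · exact Or.inl h
      · exact Or.inr h
    calc μ {ω | ε ≤ |strm T ω / T - cnt T ω / ρ|}
        ≤ μ ({ω | ε*T ≤ Z T ω} ∪ {ω | ε*T ≤ -Z T ω}) := measure_mono hsub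
      _ ≤ μ {ω | ε*T ≤ Z T ω} + μ {ω | ε*T ≤ -Z T ω} := measure_union_le _ _
      _ ≤ ENNReal.ofReal (Real.exp Earg) + ENNReal.ofReal (Real.exp Earg) :=
          add_le_add hbound1 hbound2
      _ ≤ ENNReal.ofReal (δ/2) + ENNReal.ofReal (δ/2) :=
          add_le_add (ENNReal.ofReal_le_ofReal hexp) (ENNReal.ofReal_le_ofReal hexp)
      _ = ENNReal.ofReal δ := by
          rw [← ENNReal.ofReal_add (by positivity) (by positivity)]
          norm_num
end

section
/- Given v ∈ ℝⁿ, the Euclidean projection of v onto the probability simplex Δ = {θ ∈ ℝⁿ : θ ≥ 0, ∑θᵢ = 1} is given by θᵢ = max(vᵢ − η, 0), where η = (∑_{r=1}^ρ ψ_r − 1)/ρ, ψ is the vector v sorted in nonincreasing order, and ρ = max{ j ∈ [n] : ψ_j − (1/j)(∑_{r=1}^j ψ_r − 1) > 0 }. -/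
open Finset

/-- Euclidean projection onto the probability simplex: with `ψ` the nonincreasing
rearrangement of `v`, `ρ` the largest index `j` with
`ψ_j − (1/j)(∑_{r≤j} ψ_r − 1) > 0`, and `η = (∑_{r≤ρ} ψ_r − 1)/ρ`, the vector
`θᵢ = max(vᵢ − η, 0)` lies in the simplex and minimizes the squared Euclidean
distance to `v` over the simplex. -/
theorem simplex_projection_formula
    {n : ℕ} (hn : 0 < n) (v ψ : Fin n → ℝ) (σ : Equiv.Perm (Fin n))
    (hψ : ∀ i, ψ i = v (σ i))
    (hsort : ∀ i j : Fin n, i ≤ j → ψ j ≤ ψ i)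
    (ρ : Fin n)
    (hρmem : 0 < ψ ρ -
      (1 / ((ρ : ℕ) + 1 : ℝ)) * ((∑ r ∈ Finset.univ.filter (fun r => r ≤ ρ), ψ r) - 1))
    (hρmax : ∀ j : Fin n,
      0 < ψ j -
          (1 / ((j : ℕ) + 1 : ℝ)) * ((∑ r ∈ Finset.univ.filter (fun r => r ≤ j), ψ r) - 1) →
        j ≤ ρ)
    (η : ℝ)
    (hη : η = ((∑ r ∈ Finset.univ.filter (fun r => r ≤ ρ), ψ r) - 1) / ((ρ : ℕ) + 1 : ℝ)) :
    (fun i => max (v i - η) 0) ∈ stdSimplex ℝ (Fin n) ∧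
      ∀ θ ∈ stdSimplex ℝ (Fin n),
        ∑ i, (v i - max (v i - η) 0) ^ 2 ≤ ∑ i, (v i - θ i) ^ 2 := by
  classical
  set S : Fin n → ℝ := fun j => ∑ r ∈ Finset.univ.filter (fun r => r ≤ j), ψ r with hSdef
  have hSrfl : ∀ j : Fin n, (∑ r ∈ Finset.univ.filter (fun r => r ≤ j), ψ r) = S j :=
    fun j => rfl
  have hρpos : (0:ℝ) < ((ρ:ℕ):ℝ) + 1 := by positivity
  have hη' : S ρ - 1 = (((ρ:ℕ):ℝ) + 1) * η := by
    rw [hη]; field_simp; rfl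
  have hψρ : η < ψ ρ := by
    have h1 : (1 / (((ρ:ℕ):ℝ) + 1)) * (S ρ - 1) = η := by rw [hη]; ring
    have := hρmem
    rw [hSrfl ρ] at this
    linarith [this, h1.symm ▸ this]
  -- extend ψ to ℕ
  set f : ℕ → ℝ := fun k => if h : k < n then ψ ⟨k, h⟩ else 0 with hfdef
  have hST : ∀ j : Fin n, S j = ∑ k ∈ Finset.range (j.val + 1), f k := by
    intro j
    have h1 : S j = ∑ r : Fin n, if r ≤ j then ψ r else 0 := (Finset.sum_filter _ _)
    have h2 : ∀ r : Fin n, (if r ≤ j then ψ r else 0)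
        = (fun k => if k ≤ j.val then f k else 0) (r : ℕ) := by
      intro r
      simp only [Fin.le_def, hfdef, r.isLt, dif_pos]
    rw [h1]
    rw [Finset.sum_congr rfl (fun r _ => h2 r)]
    rw [Fin.sum_univ_eq_sum_range (fun k => if k ≤ j.val then f k else 0) n]
    rw [← Finset.sum_filter]
    congr 1
    ext k
    simp only [Finset.mem_filter, Finset.mem_range, Nat.lt_succ_iff]
    constructor
    · rintro ⟨_, h⟩; exact h
    · intro h; exact ⟨lt_of_le_of_lt h j.isLt, h⟩
  -- key step: for j beyond ρ, ψ j ≤ η given the sum bound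
  have hstep : ∀ j : Fin n, ¬ j ≤ ρ →
      ((∑ k ∈ Finset.range j.val, f k) - 1 ≤ (j.val : ℝ) * η) → ψ j ≤ η := by
    intro j hj ih
    have hjρ : (ρ : ℕ) < j.val := by
      rw [Fin.le_def] at hj; omega
    have h2 : ¬ (0 < ψ j -
        (1 / ((j : ℕ) + 1 : ℝ)) * ((∑ r ∈ Finset.univ.filter (fun r => r ≤ j), ψ r) - 1)) :=
      fun h => hj (hρmax j h)
    push_neg at h2
    rw [hSrfl j] at h2
    have hSj : S j = (∑ k ∈ Finset.range j.val, f k) + ψ j := by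
      rw [hST j, Finset.sum_range_succ]
      congr 1
      simp [hfdef, j.isLt]
    have hjpos : (0:ℝ) < (j.val : ℝ) := by
      have : 0 < j.val := by omega
      exact_mod_cast this
    have hj1pos : (0:ℝ) < (j.val : ℝ) + 1 := by positivity
    -- from h2 : ψ j ≤ (1/(j+1)) * (S j - 1)
    have h3 : ((j.val : ℝ) + 1) * ψ j ≤ S j - 1 := by
      have := mul_le_mul_of_nonneg_left h2 (le_of_lt hj1pos)
      rw [mul_sub] at this
      have h4 : ((j.val:ℝ)+1) * ((1 / ((j.val:ℝ) + 1)) * (S j - 1)) = S j - 1 := by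
        field_simp
      nlinarith [this]
    rw [hSj] at h3
    nlinarith [ih]
  have key : ∀ m : ℕ, (ρ : ℕ) + 1 ≤ m → m ≤ n →
      (∑ k ∈ Finset.range m, f k) - 1 ≤ (m : ℝ) * η := by
    refine Nat.le_induction ?_ ?_
    · intro _
      have := hST ρ
      push_cast
      rw [← this]
      linarith [hη']
    · intro m hm ih hm1
      have hmn : m < n := by omega
      set j : Fin n := ⟨m, hmn⟩ with hjdef
      have hj : ¬ j ≤ ρ := by
        rw [Fin.le_def]
        simp only [hjdef]
        omega
      have hψj : ψ j ≤ η := hstep j hj (by simpa [hjdef] using ih (le_of_lt hmn))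
      have hTm1 : ∑ k ∈ Finset.range (m+1), f k = (∑ k ∈ Finset.range m, f k) + ψ j := by
        rw [Finset.sum_range_succ]
        congr 1
        simp [hfdef, hjdef, hmn]
      rw [hTm1]
      push_cast
      have := ih (le_of_lt hmn)
      linarith
  have h_le : ∀ j : Fin n, ¬ j ≤ ρ → ψ j ≤ η := by
    intro j hj
    have hjρ : (ρ : ℕ) + 1 ≤ j.val := by rw [Fin.le_def] at hj; omega
    exact hstep j hj (key j.val hjρ (le_of_lt j.isLt))
  have h_gt : ∀ i : Fin n, i ≤ ρ → η < ψ i := fun i hi => lt_of_lt_of_le hψρ (hsort i ρ hi)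
  -- the sum is 1
  have hcard : (Finset.univ.filter (fun r : Fin n => r ≤ ρ)).card = (ρ : ℕ) + 1 := by
    have : Finset.univ.filter (fun r : Fin n => r ≤ ρ) = Finset.Iic ρ := by
      ext r; simp
    rw [this, Fin.card_Iic]
  have hsum : ∑ i, max (v i - η) 0 = 1 := by
    have h1 : ∑ i, max (v i - η) 0 = ∑ i, max (ψ i - η) 0 := by
      rw [← Equiv.sum_comp σ (fun i => max (v i - η) 0)]
      exact Finset.sum_congr rfl (fun i _ => by rw [hψ])
    rw [h1]
    have h2 : ∀ i : Fin n, max (ψ i - η) 0 = if i ≤ ρ then ψ i - η else 0 := by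
      intro i
      by_cases h : i ≤ ρ
      · rw [if_pos h, max_eq_left (by linarith [h_gt i h])]
      · rw [if_neg h, max_eq_right (by linarith [h_le i h])]
    rw [Finset.sum_congr rfl (fun i _ => h2 i), ← Finset.sum_filter,
      Finset.sum_sub_distrib, Finset.sum_const, hcard, hSrfl ρ]
    push_cast
    rw [nsmul_eq_mul]
    push_cast
    linarith [hη']
  constructor
  · exact ⟨fun i => le_max_right _ _, hsum⟩
  · intro θ hθ
    obtain ⟨hθ0, hθ1⟩ := hθ
    have hkey : ∑ i, (v i - max (v i - η) 0) * (θ i - max (v i - η) 0) ≤ 0 := by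
      have hpt : ∀ i, (v i - max (v i - η) 0) * (θ i - max (v i - η) 0)
          ≤ η * (θ i - max (v i - η) 0) := by
        intro i
        by_cases h : v i - η ≤ 0
        · rw [max_eq_right h]
          simp only [sub_zero]
          nlinarith [hθ0 i]
        · rw [max_eq_left (le_of_lt (not_le.1 h))]
          have : v i - (v i - η) = η := by ring
          rw [this]
      calc ∑ i, (v i - max (v i - η) 0) * (θ i - max (v i - η) 0)
          ≤ ∑ i, η * (θ i - max (v i - η) 0) :=
            Finset.sum_le_sum (fun i _ => hpt i)
        _ = η * ((∑ i, θ i) - ∑ i, max (v i - η) 0) := by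
            rw [← Finset.mul_sum, Finset.sum_sub_distrib]
        _ = 0 := by rw [hθ1, hsum]; ring
    have expand : ∀ i : Fin n, (v i - θ i)^2
        = (v i - max (v i - η) 0)^2
          - 2 * ((v i - max (v i - η) 0) * (θ i - max (v i - η) 0))
          + (θ i - max (v i - η) 0)^2 := fun i => by ring
    rw [Finset.sum_congr rfl (fun i _ => expand i), Finset.sum_add_distrib,
      Finset.sum_sub_distrib, ← Finset.mul_sum]
    have hnn : 0 ≤ ∑ i, (θ i - max (v i - η) 0)^2 :=
      Finset.sum_nonneg (fun i _ => sq_nonneg _)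
    linarith
end
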